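/- arXiv:2005.02290 — 5 statements merged into one kernel-verified Lean document; each statement's English description precedes it below -/
import Mathlib

section
/- Let n ≥ 3 and let K ⊂ ℝ^n be an affine body of revolution with axis of revolution the line L. Let ℓ be a 1-dimensional linear subspace of ℝ^n and let π : ℝ^n → ℓ⊥ be the orthogonal projection along ℓ. Then π(K) is an affine body of revolution in ℓ⊥. Moreover, if L is parallel to ℓ then π(K) is an ellipsoid, and if L is not parallel to ℓ then π(L) is an axis of revolution of π(K). -/
open scoped RealInnerProductSpace

noncomputable section

variable {W : Type*} [NormedAddCommGroup W] [InnerProductSpace ℝ W]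

/-- The line through `p` with direction `v`. -/
def lineThrough (p v : W) : Set W := {y | ∃ t : ℝ, y = p + t • v}

/-- A convex body: a compact convex set with nonempty interior. -/
def IsConvexBody (K : Set W) : Prop := IsCompact K ∧ Convex ℝ K ∧ (interior K).Nonempty

/-- `S` is a Euclidean ball inside the slice `Δ`, centered at `q`
(possibly empty or a single point). -/
def IsBallSection (Δ : Set W) (q : W) (S : Set W) : Prop :=
  S = ∅ ∨ ∃ r : ℝ, 0 ≤ r ∧ S = {y ∈ Δ | dist y q ≤ r}

/-- `K` is a body of revolution with axis of revolution the line through `p`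
with direction `v`: every section of `K` by an affine hyperplane orthogonal to the
axis is a Euclidean ball centered at the point where the axis meets that hyperplane. -/
def IsBodyOfRevolutionAxis (K : Set W) (p v : W) : Prop :=
  v ≠ 0 ∧ ∀ c : ℝ,
    IsBallSection {y | ⟪y, v⟫ = c}
      (p + ((c - ⟪p, v⟫) / ⟪v, v⟫) • v)
      (K ∩ {y | ⟪y, v⟫ = c})

/-- `K` is a body of revolution: it admits an axis of revolution. -/
def IsBodyOfRevolution (K : Set W) : Prop := ∃ p v, IsBodyOfRevolutionAxis K p v

/-- An ellipsoid: a set affinely equivalent to the closed unit Euclidean ball. -/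
def IsEllipsoid (A : Set W) : Prop := ∃ e : W ≃ᵃ[ℝ] W, A = e '' Metric.closedBall 0 1

/-- Two sets in (possibly different) real vector spaces are affinely equivalent. -/
def AffEquivSets {V₁ V₂ : Type*} [AddCommGroup V₁] [Module ℝ V₁] [AddCommGroup V₂]
    [Module ℝ V₂] (A : Set V₁) (B : Set V₂) : Prop := ∃ e : V₁ ≃ᵃ[ℝ] V₂, e '' A = B

/-- Two sets in (possibly different) real vector spaces are linearly equivalent. -/
def LinEquivSets {V₁ V₂ : Type*} [AddCommGroup V₁] [Module ℝ V₁] [AddCommGroup V₂]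
    [Module ℝ V₂] (A : Set V₁) (B : Set V₂) : Prop := ∃ e : V₁ ≃ₗ[ℝ] V₂, e '' A = B

/-- Two sets in (possibly different) metric spaces are congruent: one is mapped
onto the other by an isometry between the ambient spaces. -/
def CongruentSets {V₁ V₂ : Type*} [PseudoEMetricSpace V₁] [PseudoEMetricSpace V₂]
    (A : Set V₁) (B : Set V₂) : Prop := ∃ e : V₁ ≃ᵢ V₂, e '' A = B

/-- `K` is an affine body of revolution with axis of revolution the line through `p`
with direction `v`: some affine equivalence `g` of the ambient space maps `K` to a
body of revolution and the given line to its axis of revolution. -/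
def IsAffineBodyOfRevolutionAxis (K : Set W) (p v : W) : Prop :=
  ∃ g : W ≃ᵃ[ℝ] W, IsBodyOfRevolutionAxis (g '' K) (g p) (g.linear v)

/-- `K` is an affine body of revolution. -/
def IsAffineBodyOfRevolution (K : Set W) : Prop := ∃ p v, IsAffineBodyOfRevolutionAxis K p v

/-- `K` is an affine body of revolution with axis of revolution `L` and associated
hyperplane of revolution `H`: some affine equivalence `g` maps `K` to a body of
revolution whose axis `g '' L` is a line through the origin with direction `v`, and
maps `H` to the orthogonal complement of that axis. -/
def IsAffineBORAxisHyp (K L H : Set W) : Prop :=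
  ∃ (g : W ≃ᵃ[ℝ] W) (v : W),
    IsBodyOfRevolutionAxis (g '' K) 0 v ∧ g '' L = lineThrough 0 v ∧
    g '' H = {y | ⟪y, v⟫ = 0}

end


noncomputable section AuxProofs

variable {W : Type*} [NormedAddCommGroup W] [InnerProductSpace ℝ W]

lemma aux_ball_of_spheres {V : Type*} [NormedAddCommGroup V] [InnerProductSpace ℝ V]
    (S Δ : Set V) (q : V)
    (hSc : IsCompact S) (hSv : Convex ℝ S) (hSΔ : S ⊆ Δ)
    (hΔ : ∀ y ∈ Δ, ∀ t : ℝ, q + t • (y - q) ∈ Δ)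
    (hsph : ∀ x ∈ S, ∀ y ∈ Δ, dist y q = dist x q → y ∈ S) :
    IsBallSection Δ q S := by
  rcases S.eq_empty_or_nonempty with h | hne
  · exact Or.inl h
  right
  obtain ⟨x₀, hx₀S, hx₀max⟩ :=
    hSc.exists_isMaxOn hne ((continuous_id.dist continuous_const).continuousOn)
  refine ⟨dist x₀ q, dist_nonneg, ?_⟩
  set r := dist x₀ q with hrdef
  apply Set.Subset.antisymm
  · intro y hy; exact ⟨hSΔ hy, hx₀max hy⟩
  · rintro y ⟨hyΔ, hyr⟩
    by_cases hr0 : r = 0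
    · have h1 : y = q := by
        have : dist y q = 0 := le_antisymm (hr0 ▸ hyr) dist_nonneg
        rwa [dist_eq_zero] at this
      have h2 : x₀ = q := by rwa [hrdef, dist_eq_zero] at hr0
      rw [h1, ← h2]; exact hx₀S
    have hrpos : 0 < r := lt_of_le_of_ne dist_nonneg (Ne.symm hr0)
    set s := y - q with hsdef
    by_cases hy0 : s = 0
    · have h1 : y = q := by rwa [sub_eq_zero] at hy0
      -- y = q: q is midpoint of x₀ and its Submodule.reflection
      have hx₀Δ : x₀ ∈ Δ := hSΔ hx₀S
      have hmΔ : q + (-1 : ℝ) • (x₀ - q) ∈ Δ := hΔ x₀ hx₀Δ (-1)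
      have hmS : q + (-1 : ℝ) • (x₀ - q) ∈ S := by
        refine hsph x₀ hx₀S _ hmΔ ?_
        rw [dist_eq_norm]; simp [norm_sub_rev x₀ q, ← dist_eq_norm]
        rw [dist_comm]
      have := hSv hx₀S hmS (by norm_num : (0:ℝ) ≤ 1/2) (by norm_num : (0:ℝ) ≤ 1/2)
        (by norm_num)
      have hmid : (1/2 : ℝ) • x₀ + (1/2 : ℝ) • (q + (-1 : ℝ) • (x₀ - q)) = q := by module
      rw [hmid] at this
      rwa [h1]
    -- main case
    set s' : V := (r / ‖s‖) • s with hs'def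
    have hsnorm : 0 < ‖s‖ := norm_pos_iff.mpr hy0
    have hs'norm : ‖s'‖ = r := by
      rw [hs'def, norm_smul, Real.norm_eq_abs, abs_div, abs_of_pos hrpos,
        abs_of_pos hsnorm, div_mul_cancel₀]
      exact ne_of_gt hsnorm
    have hpΔ : q + s' ∈ Δ := by
      have := hΔ y hyΔ (r / ‖s‖); rwa [← hsdef] at this
    have hmΔ : q + (-1 : ℝ) • s' ∈ Δ := by
      have := hΔ (q + s') hpΔ (-1); simpa using this
    have hdist : ∀ z : V, dist (q + z) q = ‖z‖ := fun z => by
      rw [dist_eq_norm]; simp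
    have hpS : q + s' ∈ S := hsph x₀ hx₀S _ hpΔ (by rw [hdist, hs'norm])
    have hmS : q + (-1 : ℝ) • s' ∈ S := hsph x₀ hx₀S _ hmΔ (by
      rw [hdist]; simp [hs'norm, hrdef])
    set t := ‖s‖ / r with htdef
    have ht0 : 0 ≤ t := div_nonneg (norm_nonneg _) (le_of_lt hrpos)
    have ht1 : t ≤ 1 := by
      rw [htdef, div_le_one hrpos]
      calc ‖s‖ = dist y q := by rw [dist_eq_norm]
        _ ≤ r := hyr
    have hts : t • s' = s := by
      rw [hs'def, htdef, smul_smul, div_mul_div_comm, mul_comm, ← div_mul_div_comm,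
        div_self (ne_of_gt hsnorm), div_self (ne_of_gt hrpos), one_mul, one_smul]
    have hcomb := hSv hpS hmS (by linarith : (0:ℝ) ≤ (1+t)/2) (by linarith : (0:ℝ) ≤ (1-t)/2)
      (by ring)
    have : ((1+t)/2) • (q + s') + ((1-t)/2) • (q + (-1:ℝ) • s') = y := by
      have hy : y = q + s := by rw [hsdef]; abel
      rw [hy, ← hts]; module
    rwa [this] at hcomb


lemma aux_bor_invariant {K : Set W} {v : W} (hbor : IsBodyOfRevolutionAxis K 0 v)
    (f : W ≃ₗᵢ[ℝ] W) (hfv : f v = v) {x : W} (hx : x ∈ K) : f x ∈ K := by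
  obtain ⟨hv, hball⟩ := hbor
  set c := ⟪x, v⟫ with hc
  set q := (0 : W) + ((c - ⟪(0:W), v⟫) / ⟪v, v⟫) • v with hq
  have hfq : f q = q := by
    rw [hq]; simp [map_smul, hfv]
  have hxmem : x ∈ K ∩ {y | ⟪y, v⟫ = c} := ⟨hx, rfl⟩
  rcases hball c with h | ⟨r, hr, h⟩
  · rw [h] at hxmem; exact absurd hxmem (Set.notMem_empty x)
  · rw [h] at hxmem
    obtain ⟨hx1, hx2⟩ := hxmem
    have h1 : ⟪f x, v⟫ = c := by
      rw [← hfv, LinearIsometryEquiv.inner_map_map]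
    have h2 : dist (f x) q ≤ r := by
      rw [← hfq, LinearIsometryEquiv.dist_map]; exact hx2
    have : f x ∈ K ∩ {y | ⟪y, v⟫ = c} := by rw [h]; exact ⟨h1, h2⟩
    exact this.1


variable [FiniteDimensional ℝ W]


lemma aux_mem_orth_of_inner {u y : W} (h : ⟪u, y⟫ = 0) : y ∈ (ℝ ∙ u)ᗮ := by
  intro z hz
  obtain ⟨a, rfl⟩ := Submodule.mem_span_singleton.mp hz
  rw [real_inner_smul_left, h, mul_zero]

lemma aux_inner_orth {u : W} {y : W} (hy : y ∈ (ℝ ∙ u)ᗮ) : ⟪y, u⟫ = 0 := by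
  rw [real_inner_comm]
  exact hy u (Submodule.mem_span_singleton_self u)

lemma aux_proj_comm (u : W) (f : W ≃ₗᵢ[ℝ] W) (hfu : f u = u) (x : W) :
    (Submodule.orthogonalProjection (ℝ ∙ u)ᗮ (f x) : W) = f (Submodule.orthogonalProjection (ℝ ∙ u)ᗮ x) := by
  set P := Submodule.orthogonalProjection (ℝ ∙ u)ᗮ with hP
  have h1 : x - ↑(P x) ∈ ℝ ∙ u := by
    have := Submodule.sub_starProjection_mem_orthogonal (K := (ℝ ∙ u)ᗮ) x
    rwa [Submodule.orthogonal_orthogonal] at this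
  obtain ⟨b, hb⟩ := Submodule.mem_span_singleton.mp h1
  have hx' : x = ↑(P x) + b • u := by rw [hb]; abel
  have hfx : f x = f ↑(P x) + b • u := by
    conv_lhs => rw [hx']
    rw [map_add, map_smul, hfu]
  have hmem : f ↑(P x) ∈ (ℝ ∙ u)ᗮ := by
    apply aux_mem_orth_of_inner
    have h0 : ⟪(P x : W), u⟫ = 0 := aux_inner_orth (Submodule.coe_mem (P x))
    calc ⟪u, f ↑(P x)⟫ = ⟪f u, f ↑(P x)⟫ := by rw [hfu]
      _ = ⟪u, ↑(P x)⟫ := LinearIsometryEquiv.inner_map_map f u _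
      _ = 0 := by rw [real_inner_comm]; exact h0
  have hPP : P (f x) = P (f ↑(P x)) := by
    rw [hfx, map_add, map_smul,
      Submodule.orthogonalProjectionOnto_orthogonalComplement_singleton_eq_zero, smul_zero, add_zero]
  rw [hPP]
  exact Submodule.starProjection_eq_self_iff.mpr hmem

lemma aux_translate {K : Set W} {p v : W} (h : IsBodyOfRevolutionAxis K p v) :
    IsBodyOfRevolutionAxis ((fun x => x - p) '' K) 0 v := by
  refine ⟨h.1, fun c => ?_⟩
  have h2 := h.2 (c + ⟪p, v⟫)
  have hset : ((fun x => x - p) '' K) ∩ {y | ⟪y, v⟫ = c}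
      = (fun x => x - p) '' (K ∩ {y | ⟪y, v⟫ = c + ⟪p, v⟫}) := by
    ext z
    constructor
    · rintro ⟨⟨x, hxK, rfl⟩, hz⟩
      refine ⟨x, ⟨hxK, ?_⟩, rfl⟩
      have : ⟪x - p, v⟫ = c := hz
      rw [inner_sub_left] at this
      simp only [Set.mem_setOf_eq]; linarith
    · rintro ⟨x, ⟨hxK, hx⟩, rfl⟩
      refine ⟨⟨x, hxK, rfl⟩, ?_⟩
      simp only [Set.mem_setOf_eq, inner_sub_left]
      simp only [Set.mem_setOf_eq] at hx
      linarith
  rw [hset]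
  rcases h2 with hemp | ⟨r, hr, heq⟩
  · left; rw [hemp, Set.image_empty]
  · right
    refine ⟨r, hr, ?_⟩
    rw [heq]
    ext z
    constructor
    · rintro ⟨x, ⟨hx1, hx2⟩, rfl⟩
      simp only [Set.mem_setOf_eq] at hx1 ⊢
      constructor
      · rw [inner_sub_left]; linarith
      · rw [dist_eq_norm] at hx2 ⊢
        convert hx2 using 2
        simp only [zero_add, inner_zero_left, sub_zero]
        have : c + ⟪p, v⟫ - ⟪p, v⟫ = c := by ring
        rw [this]
        abel
    · rintro ⟨hz1, hz2⟩
      refine ⟨z + p, ⟨?_, ?_⟩, add_sub_cancel_right z p⟩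
      · simp only [Set.mem_setOf_eq] at hz1 ⊢
        rw [inner_add_left]; linarith
      · rw [dist_eq_norm] at hz2 ⊢
        convert hz2 using 2
        simp only [zero_add, inner_zero_left, sub_zero]
        have : c + ⟪p, v⟫ - ⟪p, v⟫ = c := by ring
        rw [this]
        abel

lemma aux_transport {V₁ V₂ : Type*} [NormedAddCommGroup V₁] [InnerProductSpace ℝ V₁]
    [NormedAddCommGroup V₂] [InnerProductSpace ℝ V₂] (ι : V₁ ≃ₗᵢ[ℝ] V₂)
    {S : Set V₁} {w : V₁} (h : IsBodyOfRevolutionAxis S 0 w) :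
    IsBodyOfRevolutionAxis (ι '' S) 0 (ι w) := by
  refine ⟨fun h0 => h.1 (by simpa using congrArg ι.symm h0), fun c => ?_⟩
  have hker : ∀ y : V₂, ⟪y, ι w⟫ = ⟪ι.symm y, w⟫ := fun y => by
    rw [← ι.inner_map_map (ι.symm y) w, ι.apply_symm_apply]
  have hset : (ι '' S) ∩ {y | ⟪y, ι w⟫ = c} = ι '' (S ∩ {y | ⟪y, w⟫ = c}) := by
    ext z
    constructor
    · rintro ⟨⟨x, hxS, rfl⟩, hz⟩
      refine ⟨x, ⟨hxS, ?_⟩, rfl⟩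
      rw [Set.mem_setOf_eq, ← ι.inner_map_map x w]; exact hz
    · rintro ⟨x, ⟨hxS, hx⟩, rfl⟩
      exact ⟨⟨x, hxS, rfl⟩, by rw [Set.mem_setOf_eq, ι.inner_map_map]; exact hx⟩
  rw [hset]
  rcases h.2 c with hemp | ⟨r, hr, heq⟩
  · left; rw [hemp, Set.image_empty]
  · right
    refine ⟨r, hr, ?_⟩
    rw [heq]
    have hq : (0 : V₂) + ((c - ⟪(0:V₂), ι w⟫) / ⟪ι w, ι w⟫) • ι w
        = ι ((0 : V₁) + ((c - ⟪(0:V₁), w⟫) / ⟪w, w⟫) • w) := by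
      rw [ι.inner_map_map]
      simp [map_smul]
    ext z
    constructor
    · rintro ⟨x, ⟨hx1, hx2⟩, rfl⟩
      refine ⟨by rw [Set.mem_setOf_eq, ι.inner_map_map]; exact hx1, ?_⟩
      rw [hq, ι.dist_map]; exact hx2
    · rintro ⟨hz1, hz2⟩
      refine ⟨ι.symm z, ⟨?_, ?_⟩, ι.apply_symm_apply z⟩
      · rw [Set.mem_setOf_eq, ← hker]; exact hz1
      · rwa [hq, ← ι.apply_symm_apply z, ι.dist_map] at hz2
  -- done

lemma aux_main (K : Set W) (hKc : IsCompact K) (hKv : Convex ℝ K)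
    {v : W} (hbor : IsBodyOfRevolutionAxis K 0 v)
    {u : W} (hu : u ≠ 0) (w : ↥((ℝ ∙ u)ᗮ)) (hw : w ≠ 0)
    (hv : v ∈ Submodule.span ℝ {u, (w : W)}) :
    IsBodyOfRevolutionAxis ((Submodule.orthogonalProjection ((ℝ ∙ u)ᗮ)) '' K) 0 w := by
  set P := Submodule.orthogonalProjection ((ℝ ∙ u)ᗮ) with hPdef
  refine ⟨hw, fun c => ?_⟩
  set Δ : Set ↥((ℝ ∙ u)ᗮ) := {y | ⟪y, w⟫ = c} with hΔdef
  set q : ↥((ℝ ∙ u)ᗮ) := 0 + ((c - ⟪(0 : ↥((ℝ ∙ u)ᗮ)), w⟫) / ⟪w, w⟫) • w with hqdef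
  have hww : ⟪w, w⟫ ≠ 0 := inner_self_ne_zero.mpr hw
  have hq' : q = (c / ⟪w, w⟫) • w := by rw [hqdef]; simp
  have hqcoe : (q : W) = (c / ⟪w, w⟫) • (w : W) := by rw [hq']; simp
  have hqw : ⟪q, w⟫ = c := by
    rw [hq', real_inner_smul_left, div_mul_cancel₀ _ hww]
  have hqwW : ⟪(q : W), (w : W)⟫ = c := by rw [← Submodule.coe_inner]; exact hqw
  have hwwW : ⟪(w : W), (w : W)⟫ = ⟪w, w⟫ := (Submodule.coe_inner _ _ _).symm
  have hinnerW : ∀ y : ↥((ℝ ∙ u)ᗮ), ⟪(y : W), (w : W)⟫ = ⟪y, w⟫ := fun y =>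
    (Submodule.coe_inner _ _ _).symm
  apply aux_ball_of_spheres
  · exact (hKc.image P.continuous).inter_right
      (isClosed_eq (continuous_id.inner continuous_const) continuous_const)
  · apply Convex.inter
    · have := hKv.linear_image (P : W →ₗ[ℝ] ↥((ℝ ∙ u)ᗮ))
      rwa [ContinuousLinearMap.coe_coe] at this
    · intro a ha b hb s t hs ht hst
      simp only [hΔdef, Set.mem_setOf_eq] at ha hb ⊢
      rw [inner_add_left, real_inner_smul_left, real_inner_smul_left, ha, hb]
      linear_combination c * hst
  · exact Set.inter_subset_right
  · intro y hy t
    simp only [hΔdef, Set.mem_setOf_eq] at hy ⊢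
    rw [inner_add_left, real_inner_smul_left, inner_sub_left, hy, hqw]
    ring
  · rintro x' ⟨⟨x, hxK, hPx⟩, hx'Δ⟩ y hyΔ hdisteq
    simp only [hΔdef, Set.mem_setOf_eq] at hx'Δ hyΔ
    set s₁ : W := (x' : W) - (q : W) with hs₁def
    set s₂ : W := (y : W) - (q : W) with hs₂def
    have hx'c : (x' : W) = (q : W) + s₁ := by rw [hs₁def]; abel
    have hyc : (y : W) = (q : W) + s₂ := by rw [hs₂def]; abel
    have hmem₁ : s₁ ∈ (ℝ ∙ u)ᗮ := by
      rw [hs₁def, ← Submodule.coe_sub]; exact Submodule.coe_mem _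
    have hmem₂ : s₂ ∈ (ℝ ∙ u)ᗮ := by
      rw [hs₂def, ← Submodule.coe_sub]; exact Submodule.coe_mem _
    have hus₁ : ⟪u, s₁⟫ = 0 := hmem₁ u (Submodule.mem_span_singleton_self u)
    have hus₂ : ⟪u, s₂⟫ = 0 := hmem₂ u (Submodule.mem_span_singleton_self u)
    have hws₁ : ⟪(w : W), s₁⟫ = 0 := by
      have h0 : ⟪x' - q, w⟫ = 0 := by rw [inner_sub_left, hx'Δ, hqw, sub_self]
      rw [hs₁def, real_inner_comm]
      simpa [Submodule.coe_inner] using h0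
    have hws₂ : ⟪(w : W), s₂⟫ = 0 := by
      have h0 : ⟪y - q, w⟫ = 0 := by rw [inner_sub_left, hyΔ, hqw, sub_self]
      rw [hs₂def, real_inner_comm]
      simpa [Submodule.coe_inner] using h0
    have hnorm : ‖s₁‖ = ‖s₂‖ := by
      have h1 : dist y q = ‖s₂‖ := by
        rw [Subtype.dist_eq, dist_eq_norm, hs₂def]
      have h2 : dist x' q = ‖s₁‖ := by
        rw [Subtype.dist_eq, dist_eq_norm, hs₁def]
      rw [h1, h2] at hdisteq; exact hdisteq.symm
    set f : W ≃ₗᵢ[ℝ] W := Submodule.reflection ((ℝ ∙ (s₁ - s₂))ᗮ) with hfdef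
    have humem : u ∈ (ℝ ∙ (s₁ - s₂))ᗮ := by
      rw [Submodule.mem_orthogonal_singleton_iff_inner_left, inner_sub_right, hus₁, hus₂,
        sub_self]
    have hwmem : (w : W) ∈ (ℝ ∙ (s₁ - s₂))ᗮ := by
      rw [Submodule.mem_orthogonal_singleton_iff_inner_left, inner_sub_right, hws₁, hws₂,
        sub_self]
    have hfu : f u = u := Submodule.reflection_mem_subspace_eq_self humem
    have hfw : f (w : W) = (w : W) := Submodule.reflection_mem_subspace_eq_self hwmem
    have hfv : f v = v := by
      apply Submodule.reflection_mem_subspace_eq_self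
      have hle : Submodule.span ℝ {u, (w : W)} ≤ (ℝ ∙ (s₁ - s₂))ᗮ := by
        rw [Submodule.span_le]
        intro z hz
        rcases Set.mem_insert_iff.mp hz with rfl | hz'
        · exact humem
        · rw [Set.mem_singleton_iff.mp hz']; exact hwmem
      exact hle hv
    have hfq : f (q : W) = (q : W) := by rw [hqcoe, map_smul, hfw]
    have hfs : f s₁ = s₂ := Submodule.reflection_sub hnorm
    have hfxK : f x ∈ K := aux_bor_invariant hbor f hfv hxK
    have hPfx : (P (f x) : W) = (y : W) := by
      rw [hPdef, aux_proj_comm u f hfu x]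
      have : (Submodule.orthogonalProjection ((ℝ ∙ u)ᗮ) x : W) = (x' : W) := by
        rw [← hPdef, hPx]
      rw [this, hx'c, map_add, hfq, hfs, ← hyc]
    refine ⟨⟨f x, hfxK, Subtype.coe_injective hPfx⟩, hyΔ⟩

lemma aux_smul_ball {V : Type*} [NormedAddCommGroup V] [NormedSpace ℝ V] {r : ℝ} (hr : 0 < r) :
    (fun z : V => r • z) '' Metric.closedBall 0 1 = Metric.closedBall 0 r := by
  ext z
  constructor
  · rintro ⟨y, hy, rfl⟩
    rw [Metric.mem_closedBall, dist_zero_right] at hy ⊢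
    rw [norm_smul, Real.norm_eq_abs, abs_of_pos hr]
    calc r * ‖y‖ ≤ r * 1 := by
          exact mul_le_mul_of_nonneg_left hy (le_of_lt hr)
      _ = r := mul_one r
  · intro hz
    rw [Metric.mem_closedBall, dist_zero_right] at hz
    refine ⟨r⁻¹ • z, ?_, ?_⟩
    · rw [Metric.mem_closedBall, dist_zero_right, norm_smul, Real.norm_eq_abs,
        abs_of_pos (inv_pos.mpr hr)]
      rw [inv_mul_le_iff₀ hr, mul_one]
      exact hz
    · show r • r⁻¹ • z = z
      rw [smul_smul, mul_inv_cancel₀ (ne_of_gt hr), one_smul]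

lemma aux_parallel_ball (K : Set W) (hKc : IsCompact K) (hKv : Convex ℝ K)
    (hKne : K.Nonempty) {v : W} (hbor : IsBodyOfRevolutionAxis K 0 v)
    {u : W} (hu : u ≠ 0) {t : ℝ} (hv : v = t • u) :
    ∃ r : ℝ, 0 ≤ r ∧ (Submodule.orthogonalProjection ((ℝ ∙ u)ᗮ)) '' K = Metric.closedBall 0 r := by
  set P := Submodule.orthogonalProjection ((ℝ ∙ u)ᗮ) with hPdef
  have hconv : Convex ℝ (⇑P '' K) := by
    have := hKv.linear_image (P : W →ₗ[ℝ] ↥((ℝ ∙ u)ᗮ))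
    rwa [ContinuousLinearMap.coe_coe] at this
  have hsph : ∀ x' ∈ ⇑P '' K, ∀ y ∈ (Set.univ : Set ↥((ℝ ∙ u)ᗮ)),
      dist y 0 = dist x' 0 → y ∈ ⇑P '' K := by
    rintro x' ⟨x, hxK, rfl⟩ y - hdist
    set s₁ : W := ((P x : ↥((ℝ ∙ u)ᗮ)) : W) with hs₁def
    set s₂ : W := (y : W) with hs₂def
    have hnorm : ‖s₁‖ = ‖s₂‖ := by
      have h1 : dist y (0 : ↥((ℝ ∙ u)ᗮ)) = ‖s₂‖ := by
        rw [Subtype.dist_eq, dist_eq_norm]; simp [hs₂def]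
      have h2 : dist (P x) (0 : ↥((ℝ ∙ u)ᗮ)) = ‖s₁‖ := by
        rw [Subtype.dist_eq, dist_eq_norm]; simp [hs₁def]
      rw [h1, h2] at hdist; exact hdist.symm
    have hus₁ : ⟪u, s₁⟫ = 0 := (P x).2 u (Submodule.mem_span_singleton_self u)
    have hus₂ : ⟪u, s₂⟫ = 0 := y.2 u (Submodule.mem_span_singleton_self u)
    set f : W ≃ₗᵢ[ℝ] W := Submodule.reflection ((ℝ ∙ (s₁ - s₂))ᗮ) with hfdef
    have humem : u ∈ (ℝ ∙ (s₁ - s₂))ᗮ := by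
      rw [Submodule.mem_orthogonal_singleton_iff_inner_left, inner_sub_right, hus₁, hus₂,
        sub_self]
    have hfu : f u = u := Submodule.reflection_mem_subspace_eq_self humem
    have hfv : f v = v := by rw [hv, map_smul, hfu]
    have hfxK : f x ∈ K := aux_bor_invariant hbor f hfv hxK
    have hPfx : ((P (f x) : ↥((ℝ ∙ u)ᗮ)) : W) = (y : W) := by
      rw [hPdef, aux_proj_comm u f hfu x, ← hs₁def, Submodule.reflection_sub hnorm]
    exact ⟨f x, hfxK, Subtype.coe_injective hPfx⟩
  have hball := aux_ball_of_spheres (⇑P '' K) Set.univ 0 (hKc.image P.continuous) hconv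
    (Set.subset_univ _) (fun y _ t => Set.mem_univ _) hsph
  rcases hball with hemp | ⟨r, hr, heq⟩
  · exfalso
    obtain ⟨x, hx⟩ := hKne
    exact absurd (Set.mem_image_of_mem _ hx) (hemp ▸ Set.notMem_empty (P x))
  · refine ⟨r, hr, ?_⟩
    rw [heq]
    ext z
    simp [Metric.mem_closedBall, dist_eq_norm]

end AuxProofs

set_option maxHeartbeats 2000000

/-- The orthogonal projection (along a line ℓ = ℝ∙u) of an affine body
of revolution K ⊂ ℝ^n with axis of revolution the line through p with direction v
is an affine body of revolution; if the axis is parallel to ℓ the projection is an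
ellipsoid, and otherwise the projected line is an axis of revolution of the
projection. -/
theorem stmt_7 (n : ℕ) (hn : 3 ≤ n)
    (K : Set (EuclideanSpace ℝ (Fin n))) (hK : IsConvexBody K)
    (p v : EuclideanSpace ℝ (Fin n)) (hax : IsAffineBodyOfRevolutionAxis K p v)
    (u : EuclideanSpace ℝ (Fin n)) (hu : u ≠ 0) :
    IsAffineBodyOfRevolution ((Submodule.orthogonalProjection ((ℝ ∙ u)ᗮ)) '' K) ∧
    ((∃ t : ℝ, v = t • u) → IsEllipsoid ((Submodule.orthogonalProjection ((ℝ ∙ u)ᗮ)) '' K)) ∧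
    (¬ (∃ t : ℝ, v = t • u) →
      IsAffineBodyOfRevolutionAxis ((Submodule.orthogonalProjection ((ℝ ∙ u)ᗮ)) '' K)
        (Submodule.orthogonalProjection ((ℝ ∙ u)ᗮ) p) (Submodule.orthogonalProjection ((ℝ ∙ u)ᗮ) v)) := by
  classical
  obtain ⟨hKcomp, hKconv, hKint⟩ := hK
  obtain ⟨g, hg⟩ := hax
  have hv1ne : g.linear v ≠ 0 := hg.1
  have hvne : v ≠ 0 := fun h0 => hv1ne (by rw [h0, map_zero])
  set h : EuclideanSpace ℝ (Fin n) ≃ₗ[ℝ] EuclideanSpace ℝ (Fin n) := g.linear with hhdef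
  set u₁ := h u with hu₁def
  set v₁ := h v with hv₁def
  have hu₁ : u₁ ≠ 0 := fun h0 => hu (h.map_eq_zero_iff.mp h0)
  set g1 : EuclideanSpace ℝ (Fin n) → EuclideanSpace ℝ (Fin n) := fun x => g x - g p with hg1def
  set K₁ := g1 '' K with hK₁def
  have hbor1 : IsBodyOfRevolutionAxis K₁ 0 v₁ := by
    have := aux_translate hg
    rwa [Set.image_image] at this
  set b : EuclideanSpace ℝ (Fin n) := g 0 - g p with hbdef
  have hgx : ∀ x, g x = h x + g 0 := by
    intro x
    have h1 := g.toAffineMap.map_vadd (0 : EuclideanSpace ℝ (Fin n)) x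
    simpa [vadd_eq_add] using h1
  have hg1x : ∀ x, g1 x = h x + b := by
    intro x
    show g x - g p = h x + b
    rw [hgx x, hbdef]; abel
  have hg1p : g1 p = 0 := by show g p - g p = 0; rw [sub_self]
  have hpb : h p + b = 0 := by rw [← hg1x p, hg1p]
  have hgc : Continuous g1 := by
    show Continuous fun x => g x - g p
    exact (g.continuous_of_finiteDimensional).sub continuous_const
  have hK₁c : IsCompact K₁ := hKcomp.image hgc
  have hK₁v : Convex ℝ K₁ := by
    have h1 : Convex ℝ (⇑g '' K) := by
      have := hKconv.affine_image g.toAffineMap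
      rwa [AffineEquiv.coe_toAffineMap] at this
    have h2 := h1.translate (-(g p))
    have h3 : (fun z => -(g p) + z) '' (⇑g '' K) = K₁ := by
      rw [hK₁def, Set.image_image]
      apply Set.image_congr'
      intro x
      show -(g p) + g x = g x - g p
      abel
    rwa [h3] at h2
  have hKne : K.Nonempty := by
    obtain ⟨x, hx⟩ := hKint; exact ⟨x, interior_subset hx⟩
  have hK₁ne : K₁.Nonempty := hKne.image g1
  set P := Submodule.orthogonalProjection ((ℝ ∙ u)ᗮ) with hPdef
  set P₁ := Submodule.orthogonalProjection ((ℝ ∙ u₁)ᗮ) with hP₁def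
  set eLM : ↥((ℝ ∙ u)ᗮ) →ₗ[ℝ] ↥((ℝ ∙ u₁)ᗮ) :=
    ((P₁ : EuclideanSpace ℝ (Fin n) →ₗ[ℝ] ↥((ℝ ∙ u₁)ᗮ)).comp
      ((h : EuclideanSpace ℝ (Fin n) →ₗ[ℝ] EuclideanSpace ℝ (Fin n)).comp
        ((ℝ ∙ u)ᗮ).subtype)) with heLMdef
  have heLMapp : ∀ x : ↥((ℝ ∙ u)ᗮ), eLM x = P₁ (h (x : EuclideanSpace ℝ (Fin n))) := fun x => rfl
  have heinj : Function.Injective eLM := by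
    rw [← LinearMap.ker_eq_bot, Submodule.eq_bot_iff]
    intro x hx
    rw [LinearMap.mem_ker, heLMapp] at hx
    have h2 : h ↑x - ↑(P₁ (h ↑x)) ∈ ℝ ∙ u₁ := by
      have := Submodule.sub_starProjection_mem_orthogonal (K := (ℝ ∙ u₁)ᗮ) (h ↑x)
      rwa [Submodule.orthogonal_orthogonal] at this
    rw [hx, ZeroMemClass.coe_zero, sub_zero] at h2
    obtain ⟨a, ha⟩ := Submodule.mem_span_singleton.mp h2
    have h4 : (x : EuclideanSpace ℝ (Fin n)) = a • u := by
      apply h.injective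
      rw [map_smul, ← hu₁def, ha]
    have h5 : (x : EuclideanSpace ℝ (Fin n)) ∈ ℝ ∙ u := by
      rw [h4]; exact Submodule.smul_mem _ a (Submodule.mem_span_singleton_self u)
    have h6 : ⟪(x : EuclideanSpace ℝ (Fin n)), (x : EuclideanSpace ℝ (Fin n))⟫ = 0 :=
      x.2 _ h5
    exact Subtype.ext (inner_self_eq_zero.mp h6)
  have hrank : Module.finrank ℝ ↥((ℝ ∙ u)ᗮ) = Module.finrank ℝ ↥((ℝ ∙ u₁)ᗮ) := by
    have e1 : Module.finrank ℝ ↥(ℝ ∙ u) = 1 := finrank_span_singleton hu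
    have e2 : Module.finrank ℝ ↥(ℝ ∙ u₁) = 1 := finrank_span_singleton hu₁
    have f1 := Submodule.finrank_add_finrank_orthogonal
      (K := (ℝ ∙ u : Submodule ℝ (EuclideanSpace ℝ (Fin n))))
    have f2 := Submodule.finrank_add_finrank_orthogonal
      (K := (ℝ ∙ u₁ : Submodule ℝ (EuclideanSpace ℝ (Fin n))))
    rw [e1] at f1; rw [e2] at f2
    omega
  have hesurj : Function.Surjective eLM :=
    (LinearMap.injective_iff_surjective_of_finrank_eq_finrank hrank).mp heinj
  set e : ↥((ℝ ∙ u)ᗮ) ≃ₗ[ℝ] ↥((ℝ ∙ u₁)ᗮ) := LinearEquiv.ofBijective eLM ⟨heinj, hesurj⟩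
    with hedef
  have heapp : ∀ x : ↥((ℝ ∙ u)ᗮ), e x = P₁ (h (x : EuclideanSpace ℝ (Fin n))) := fun x => rfl
  have heπ : ∀ x : EuclideanSpace ℝ (Fin n), e (P x) = P₁ (h x) := by
    intro x
    have h1 : x - ↑(P x) ∈ ℝ ∙ u := by
      have := Submodule.sub_starProjection_mem_orthogonal (K := (ℝ ∙ u)ᗮ) x
      rwa [Submodule.orthogonal_orthogonal] at this
    obtain ⟨t, ht⟩ := Submodule.mem_span_singleton.mp h1
    have h2 : h x = h ↑(P x) + t • u₁ := by
      have hx2 : x = ↑(P x) + t • u := by rw [ht]; abel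
      conv_lhs => rw [hx2]
      rw [map_add, map_smul, hu₁def]
    have h3 : P₁ (t • u₁) = 0 := by
      rw [map_smul, hP₁def, Submodule.orthogonalProjectionOnto_orthogonalComplement_singleton_eq_zero,
        smul_zero]
    rw [heapp, h2, map_add, h3, add_zero]
  have hrank' : Module.finrank ℝ ↥((ℝ ∙ u₁)ᗮ) = Module.finrank ℝ ↥((ℝ ∙ u)ᗮ) := hrank.symm
  set ι : ↥((ℝ ∙ u₁)ᗮ) ≃ₗᵢ[ℝ] ↥((ℝ ∙ u)ᗮ) :=
    ((stdOrthonormalBasis ℝ ↥((ℝ ∙ u₁)ᗮ)).repr.trans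
      ((LinearIsometryEquiv.piLpCongrLeft 2 ℝ ℝ (finCongr hrank')).trans
        (stdOrthonormalBasis ℝ ↥((ℝ ∙ u)ᗮ)).repr.symm)) with hιdef
  set L : ↥((ℝ ∙ u)ᗮ) ≃ₗ[ℝ] ↥((ℝ ∙ u)ᗮ) := e.trans ι.toLinearEquiv with hLdef
  set G : ↥((ℝ ∙ u)ᗮ) ≃ᵃ[ℝ] ↥((ℝ ∙ u)ᗮ) :=
    L.toAffineEquiv.trans (AffineEquiv.constVAdd ℝ _ (ι (P₁ b))) with hGdef
  have hGapp : ∀ z, G z = ι (e z + P₁ b) := by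
    intro z
    show ι (P₁ b) +ᵥ (L z) = ι (e z + P₁ b)
    rw [map_add, vadd_eq_add, add_comm]
    rfl
  have hGlin : ∀ z, G.linear z = ι (e z) := fun z => rfl
  have hGP : ∀ x, G (P x) = ι (P₁ (g1 x)) := by
    intro x
    rw [hGapp, heπ, ← map_add, ← hg1x x]
  have hGK : ⇑G '' (⇑P '' K) = ⇑ι '' (⇑P₁ '' K₁) := by
    rw [hK₁def, Set.image_image, Set.image_image, Set.image_image]
    exact Set.image_congr' (fun x => hGP x)
  have hGp : G (P p) = 0 := by
    rw [hGP p, hg1p, map_zero, map_zero]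
  have hGv : G.linear (P v) = ι (P₁ v₁) := by
    rw [hGlin, heπ, hv₁def]
  by_cases hpar : ∃ t : ℝ, v = t • u
  · -- parallel case
    obtain ⟨t, ht⟩ := hpar
    have hv₁par : v₁ = t • u₁ := by rw [hv₁def, ht, map_smul, hu₁def]
    -- nonzero element of (ℝ∙u₁)ᗮ
    have hpos : 0 < Module.finrank ℝ ↥((ℝ ∙ u₁)ᗮ) := by
      have f2 := Submodule.finrank_add_finrank_orthogonal
        (K := (ℝ ∙ u₁ : Submodule ℝ (EuclideanSpace ℝ (Fin n))))
      rw [finrank_span_singleton hu₁] at f2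
      have : Module.finrank ℝ (EuclideanSpace ℝ (Fin n)) = n := finrank_euclideanSpace_fin
      omega
    have : Nontrivial ↥((ℝ ∙ u₁)ᗮ) := Module.nontrivial_of_finrank_pos hpos
    obtain ⟨w₀, hw₀⟩ := exists_ne (0 : ↥((ℝ ∙ u₁)ᗮ))
    have hv_span : v₁ ∈ Submodule.span ℝ {u₁, (w₀ : EuclideanSpace ℝ (Fin n))} := by
      rw [hv₁par]
      exact Submodule.smul_mem _ t (Submodule.subset_span (Set.mem_insert _ _))
    have hmain := aux_main K₁ hK₁c hK₁v hbor1 hu₁ w₀ hw₀ hv_span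
    have htrans := aux_transport ι hmain
    rw [← hGK] at htrans
    refine ⟨⟨P p, G.linear.symm (ι w₀), G, ?_⟩, fun _ => ?_, fun hnp => absurd ⟨t, ht⟩ hnp⟩
    · rw [hGp, LinearEquiv.apply_symm_apply]
      exact htrans
    · -- ellipsoid
      obtain ⟨r, hr0, hballeq⟩ := aux_parallel_ball K₁ hK₁c hK₁v hK₁ne hbor1 hu₁ hv₁par
      -- r > 0
      obtain ⟨x₀, hx₀⟩ := hKint
      have hnhds : K ∈ nhds x₀ := mem_interior_iff_mem_nhds.mp hx₀
      have hK₁nhds : K₁ ∈ nhds (g1 x₀) := by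
        let gH : EuclideanSpace ℝ (Fin n) ≃ₜ EuclideanSpace ℝ (Fin n) :=
          ⟨g.toEquiv, g.continuous_of_finiteDimensional, g.symm.continuous_of_finiteDimensional⟩
        let g1H := gH.trans (Homeomorph.subRight (g p))
        have himg : ⇑g1H '' K = K₁ := by
          rw [hK₁def]
          exact Set.image_congr' (fun x => rfl)
        have := g1H.isOpenMap.image_mem_nhds hnhds
        rwa [himg] at this
      obtain ⟨ε, hε, hballK⟩ := Metric.mem_nhds_iff.mp hK₁nhds
      have hrpos : 0 < r := by
        obtain ⟨y₀, hy₀mem, hy₀ne⟩ :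
            ∃ y₀ : ↥((ℝ ∙ u₁)ᗮ), y₀ ∈ ⇑P₁ '' K₁ ∧ y₀ ≠ 0 := by
          by_cases hz : P₁ (g1 x₀) = 0
          · set w₁ : ↥((ℝ ∙ u₁)ᗮ) := (ε / (2 * ‖w₀‖)) • w₀ with hw₁def
            have hw₀n : 0 < ‖w₀‖ := norm_pos_iff.mpr hw₀
            have hw₁norm : ‖w₁‖ = ε / 2 := by
              have h9 : ‖(w₀ : EuclideanSpace ℝ (Fin n))‖ ≠ 0 := by
                simpa using ne_of_gt hw₀n
              rw [hw₁def, norm_smul, Real.norm_eq_abs, abs_of_pos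
                (div_pos hε (by positivity))]
              field_simp
            have hx₁mem : g1 x₀ + (w₁ : EuclideanSpace ℝ (Fin n)) ∈ K₁ := by
              apply hballK
              rw [Metric.mem_ball, dist_eq_norm, add_sub_cancel_left]
              have : ‖(w₁ : EuclideanSpace ℝ (Fin n))‖ = ε / 2 := hw₁norm
              rw [this]; linarith
            refine ⟨w₁, ⟨g1 x₀ + ↑w₁, hx₁mem, ?_⟩, ?_⟩
            · rw [map_add, hz, zero_add, hP₁def, Submodule.orthogonalProjectionOnto_mem_subspace_eq_self]
            · intro h0
              rw [h0] at hw₁norm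
              simp only [norm_zero] at hw₁norm
              linarith
          · refine ⟨P₁ (g1 x₀), ⟨g1 x₀, ?_, rfl⟩, hz⟩
            exact hballK (Metric.mem_ball_self hε)
        rw [hballeq] at hy₀mem
        rw [Metric.mem_closedBall, dist_zero_right] at hy₀mem
        have := norm_pos_iff.mpr hy₀ne
        linarith
      -- π K = G.symm '' closedBall 0 r
      have himg2 : ⇑P '' K = ⇑G.symm '' (Metric.closedBall 0 r) := by
        have h1 : ⇑G '' (⇑P '' K) = Metric.closedBall (0 : ↥((ℝ ∙ u)ᗮ)) r := by
          rw [hGK, hballeq, ι.image_closedBall, map_zero]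
        rw [← h1]
        ext z
        constructor
        · intro hz
          exact ⟨G z, Set.mem_image_of_mem _ hz, G.symm_apply_apply z⟩
        · rintro ⟨y, ⟨z', hz', rfl⟩, rfl⟩
          rwa [G.symm_apply_apply]
      refine ⟨(LinearEquiv.smulOfNeZero ℝ _ r (ne_of_gt hrpos)).toAffineEquiv.trans G.symm, ?_⟩
      rw [AffineEquiv.coe_trans, Set.image_comp]
      have hsmul : ⇑(LinearEquiv.smulOfNeZero ℝ ↥((ℝ ∙ u)ᗮ) r (ne_of_gt hrpos)).toAffineEquiv ''
          Metric.closedBall 0 1 = Metric.closedBall 0 r := by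
        have hfn : ⇑(LinearEquiv.smulOfNeZero ℝ ↥((ℝ ∙ u)ᗮ) r
            (ne_of_gt hrpos)).toAffineEquiv = fun z => r • z := rfl
        rw [hfn, aux_smul_ball hrpos]
      rw [hsmul]
      exact himg2
  · -- nonparallel case
    have hw₀ne : P₁ v₁ ≠ 0 := by
      intro h0
      have h2 : v₁ - ↑(P₁ v₁) ∈ ℝ ∙ u₁ := by
        have := Submodule.sub_starProjection_mem_orthogonal (K := (ℝ ∙ u₁)ᗮ) v₁
        rwa [Submodule.orthogonal_orthogonal] at this
      rw [h0, ZeroMemClass.coe_zero, sub_zero] at h2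
      obtain ⟨a, ha⟩ := Submodule.mem_span_singleton.mp h2
      apply hpar
      refine ⟨a, ?_⟩
      apply h.injective
      rw [map_smul, ← hu₁def, ha, hv₁def]
    set w₀ := P₁ v₁ with hw₀def
    have hv_span : v₁ ∈ Submodule.span ℝ {u₁, (w₀ : EuclideanSpace ℝ (Fin n))} := by
      have h2 : v₁ - ↑w₀ ∈ ℝ ∙ u₁ := by
        have := Submodule.sub_starProjection_mem_orthogonal (K := (ℝ ∙ u₁)ᗮ) v₁
        rwa [Submodule.orthogonal_orthogonal] at this
      obtain ⟨a, ha⟩ := Submodule.mem_span_singleton.mp h2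
      have : v₁ = a • u₁ + ↑w₀ := by rw [ha]; abel
      rw [this]
      exact Submodule.add_mem _
        (Submodule.smul_mem _ a (Submodule.subset_span (Set.mem_insert _ _)))
        (Submodule.subset_span (Set.mem_insert_of_mem _ rfl))
    have hmain := aux_main K₁ hK₁c hK₁v hbor1 hu₁ w₀ hw₀ne hv_span
    have htrans := aux_transport ι hmain
    rw [← hGK] at htrans
    have hfinal : IsBodyOfRevolutionAxis (⇑G '' (⇑P '' K)) (G (P p)) (G.linear (P v)) := by
      rw [hGp, hGv]
      exact htrans
    exact ⟨⟨P p, P v, G, hfinal⟩, fun hp => absurd hp hpar, fun _ => ⟨G, hfinal⟩⟩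
end

section
/- Let n ≥ 3 and let K ⊂ ℝ^n be a body of revolution with axis of revolution the line L. Let ℓ be a 1-dimensional linear subspace of ℝ^n and let π : ℝ^n → ℓ⊥ be the orthogonal projection along ℓ. If L is parallel to ℓ, then π(K) is a Euclidean ball in ℓ⊥; if L is not parallel to ℓ, then π(K) is a body of revolution in ℓ⊥ with axis of revolution π(L). -/
open scoped RealInnerProductSpace

section Helpers

open scoped RealInnerProductSpace

variable {E : Type*} [NormedAddCommGroup E] [InnerProductSpace ℝ E]

/-- There is a linear isometry fixing `u` and `v` and carrying `a` to `b`,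
whenever `a, b` have the same norm and are both orthogonal to `u` and `v`. -/
lemma exists_isometry_fixing (u v a b : E) (hab : ‖a‖ = ‖b‖)
    (hua : ⟪u, a⟫ = 0) (hub : ⟪u, b⟫ = 0) (hva : ⟪v, a⟫ = 0) (hvb : ⟪v, b⟫ = 0) :
    ∃ A : E ≃ₗᵢ[ℝ] E, A u = u ∧ A v = v ∧ A a = b := by
  by_cases hd : a = b
  · exact ⟨LinearIsometryEquiv.refl ℝ E, rfl, rfl, by simp [hd]⟩
  · set w : E := a - b with hw
    refine ⟨Submodule.reflection ((ℝ ∙ w)ᗮ), ?_, ?_, ?_⟩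
    · exact Submodule.reflection_mem_subspace_eq_self (by
        rw [Submodule.mem_orthogonal_singleton_iff_inner_right]
        rw [real_inner_comm]
        simp [hw, inner_sub_right, hua, hub])
    · exact Submodule.reflection_mem_subspace_eq_self (by
        rw [Submodule.mem_orthogonal_singleton_iff_inner_right]
        rw [real_inner_comm]
        simp [hw, inner_sub_right, hva, hvb])
    · have hmem1 : ((2:ℝ)⁻¹) • (a + b) ∈ (ℝ ∙ w)ᗮ := by
        rw [Submodule.mem_orthogonal_singleton_iff_inner_right]
        rw [inner_smul_right, hw, inner_sub_left, inner_add_right, inner_add_right,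
          real_inner_self_eq_norm_sq, real_inner_comm b a, real_inner_self_eq_norm_sq, hab]
        ring
      have hmem2 : ((2:ℝ)⁻¹) • w ∈ ((ℝ ∙ w)ᗮ)ᗮ := by
        rw [Submodule.orthogonal_orthogonal]
        exact Submodule.smul_mem _ _ (Submodule.mem_span_singleton_self w)
      have ha : a = ((2:ℝ)⁻¹) • (a + b) + ((2:ℝ)⁻¹) • w := by
        rw [hw]; module
      rw [ha, map_add, Submodule.reflection_mem_subspace_eq_self hmem1,
        Submodule.reflection_mem_subspace_orthogonalComplement_eq_neg hmem2, hw]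
      module

/-- A body of revolution is invariant under every isometry obtained by conjugating
a linear isometry fixing the direction of the axis by the translation taking the
origin to a point on the axis. -/
lemma bor_invariant {K : Set E} {p v : E} (hax : IsBodyOfRevolutionAxis K p v)
    (A : E ≃ₗᵢ[ℝ] E) (hAv : A v = v) {x : E} (hx : x ∈ K) : p + A (x - p) ∈ K := by
  obtain ⟨hv0, hslice⟩ := hax
  rcases hslice ⟪x, v⟫ with hemp | ⟨r, hr, hset⟩
  · have hxin : x ∈ K ∩ {y | ⟪y, v⟫ = ⟪x, v⟫} := Set.mem_inter hx rfl
    rw [hemp] at hxin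
    exact hxin.elim
  · set m : E := p + ((⟪x, v⟫ - ⟪p, v⟫) / ⟪v, v⟫) • v with hm
    have hxm : x ∈ K ∩ {y | ⟪y, v⟫ = ⟪x, v⟫} := Set.mem_inter hx rfl
    rw [hset] at hxm
    have hgΔ : ⟪p + A (x - p), v⟫ = ⟪x, v⟫ := by
      have : ⟪A (x - p), v⟫ = ⟪x - p, v⟫ := by
        conv_lhs => rw [← hAv]
        rw [A.inner_map_map]
      rw [inner_add_left, this, inner_sub_left]; ring
    have hgm : dist (p + A (x - p)) m ≤ r := by
      have hdist : dist (p + A (x - p)) m = dist x m := by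
        have hmrw : m = p + A (m - p) := by
          rw [hm, add_sub_cancel_left, LinearIsometryEquiv.map_smul, hAv]
        conv_lhs => rw [hmrw]
        rw [dist_add_left, A.dist_map, dist_sub_right]
      rw [hdist]; exact hxm.2
    have hmem : p + A (x - p) ∈ K ∩ {y | ⟪y, v⟫ = ⟪x, v⟫} := by
      rw [hset]; exact ⟨hgΔ, hgm⟩
    exact hmem.1

end Helpers

open scoped RealInnerProductSpace

set_option maxHeartbeats 2000000

/-- The orthogonal projection (along a line ℓ = ℝ∙u) of a body of
revolution K ⊂ ℝ^n with axis of revolution the line through p with direction v is: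
a Euclidean ball if the axis is parallel to ℓ, and otherwise a body of revolution
with axis of revolution the projected line. -/
theorem stmt_8 (n : ℕ) (hn : 3 ≤ n)
    (K : Set (EuclideanSpace ℝ (Fin n))) (hK : IsConvexBody K)
    (p v : EuclideanSpace ℝ (Fin n)) (hax : IsBodyOfRevolutionAxis K p v)
    (u : EuclideanSpace ℝ (Fin n)) (hu : u ≠ 0) :
    ((∃ t : ℝ, v = t • u) → ∃ (q : ↥((ℝ ∙ u)ᗮ)) (r : ℝ), 0 ≤ r ∧
      (Submodule.orthogonalProjectionOnto ((ℝ ∙ u)ᗮ)) '' K = Metric.closedBall q r) ∧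
    (¬ (∃ t : ℝ, v = t • u) →
      IsBodyOfRevolutionAxis ((Submodule.orthogonalProjectionOnto ((ℝ ∙ u)ᗮ)) '' K)
        (Submodule.orthogonalProjectionOnto ((ℝ ∙ u)ᗮ) p) (Submodule.orthogonalProjectionOnto ((ℝ ∙ u)ᗮ) v)) := by
  classical
  obtain ⟨hKcomp, hKconv, hKint⟩ := hK
  have hKne : K.Nonempty := hKint.mono interior_subset
  obtain ⟨hv0, hslice⟩ := hax
  set U : Submodule ℝ (EuclideanSpace ℝ (Fin n)) := (ℝ ∙ u)ᗮ with hUdef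
  set P := Submodule.orthogonalProjectionOnto U with hPdef
  set Q : EuclideanSpace ℝ (Fin n) → EuclideanSpace ℝ (Fin n) := fun x => ↑(P x) with hQdef
  have hu2 : ‖u‖ ^ 2 ≠ 0 := pow_ne_zero 2 (norm_ne_zero_iff.mpr hu)
  have hQform : ∀ x, Q x = x - (⟪u, x⟫ / (‖u‖ ^ 2)) • u := by
    intro x
    have h := Submodule.starProjection_add_starProjection_orthogonal (K := ℝ ∙ u) x
    rw [Submodule.starProjection_singleton ℝ (v := u) x] at h
    exact eq_sub_of_add_eq' h
  have hQu : Q u = 0 := by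
    rw [hQform, real_inner_self_eq_norm_sq, div_self hu2, one_smul, sub_self]
  have hQmem : ∀ x, Q x ∈ U := fun x => (P x).2
  have hQid : ∀ x, x ∈ U → Q x = x := fun x hx => Submodule.starProjection_eq_self_iff.mpr hx
  have hadj : ∀ x y, ⟪Q x, y⟫ = ⟪x, Q y⟫ := fun x y =>
    Submodule.inner_starProjection_left_eq_right U x y
  have hQadd : ∀ x y, Q (x + y) = Q x + Q y := by intro x y; simp [hQdef]
  have hQsub : ∀ x y, Q (x - y) = Q x - Q y := by intro x y; simp [hQdef]
  have hQsmul : ∀ (t : ℝ) x, Q (t • x) = t • Q x := by intro t x; simp [hQdef]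
  have huinner : ∀ x, x ∈ U → ⟪u, x⟫ = 0 := fun x hx =>
    Submodule.mem_orthogonal_singleton_iff_inner_right.mp (hUdef ▸ hx)
  have hcomm : ∀ (A : EuclideanSpace ℝ (Fin n) ≃ₗᵢ[ℝ] EuclideanSpace ℝ (Fin n)),
      A u = u → ∀ x, Q (A x) = A (Q x) := by
    intro A hAu x
    have hinnAu : ⟪u, A x⟫ = ⟪u, x⟫ := by
      calc ⟪u, A x⟫ = ⟪A u, A x⟫ := by rw [hAu]
      _ = ⟪u, x⟫ := A.inner_map_map u x
    rw [hQform, hQform, map_sub, LinearIsometryEquiv.map_smul, hAu, hinnAu]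
  have hQcont : Continuous Q := continuous_subtype_val.comp (P.continuous)
  constructor
  · -- axis parallel to ℓ : projection is a ball
    rintro ⟨t, hvt⟩
    have ht0 : t ≠ 0 := fun h => hv0 (by rw [hvt, h, zero_smul])
    have hQv : Q v = 0 := by rw [hvt, hQsmul, hQu, smul_zero]
    obtain ⟨x₀, hx₀K, hmax⟩ := hKcomp.exists_isMaxOn hKne
      (((hQcont.dist continuous_const)).continuousOn
        (f := fun x => dist (Q x) (Q p)))
    set R := dist (Q x₀) (Q p) with hR
    refine ⟨P p, R, dist_nonneg, ?_⟩
    ext z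
    simp only [Set.mem_image, Metric.mem_closedBall]
    constructor
    · rintro ⟨x, hxK, rfl⟩
      rw [Subtype.dist_eq]
      exact hmax hxK
    · intro hz
      rcases hslice ⟪x₀, v⟫ with hemp | ⟨r, hr, hset⟩
      · have hxin : x₀ ∈ K ∩ {y | ⟪y, v⟫ = ⟪x₀, v⟫} := Set.mem_inter hx₀K rfl
        rw [hemp] at hxin
        exact hxin.elim
      · set m : EuclideanSpace ℝ (Fin n) :=
          p + ((⟪x₀, v⟫ - ⟪p, v⟫) / ⟪v, v⟫) • v with hm
        have hvv : ⟪v, v⟫ ≠ 0 := inner_self_ne_zero.mpr hv0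
        have hmv : ⟪m, v⟫ = ⟪x₀, v⟫ := by
          rw [hm, inner_add_left, real_inner_smul_left, div_mul_cancel₀ _ hvv]
          ring
        have hQm : Q m = Q p := by
          rw [hm, hQadd, hQsmul, hQv, smul_zero, add_zero]
        have hmemU : x₀ - m ∈ U := by
          rw [hUdef, Submodule.mem_orthogonal_singleton_iff_inner_right]
          have h1 : ⟪x₀ - m, v⟫ = 0 := by rw [inner_sub_left, hmv, sub_self]
          rw [hvt, real_inner_smul_right] at h1
          rw [real_inner_comm]
          exact (mul_eq_zero.mp h1).resolve_left ht0
        have hRm : dist x₀ m = R := by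
          rw [hR, ← hQm, dist_eq_norm, dist_eq_norm, ← hQsub, hQid _ hmemU]
        have hx₀slice : x₀ ∈ K ∩ {y | ⟪y, v⟫ = ⟪x₀, v⟫} := Set.mem_inter hx₀K rfl
        rw [hset] at hx₀slice
        have hRr : R ≤ r := hRm ▸ hx₀slice.2
        set y : EuclideanSpace ℝ (Fin n) := (↑z : EuclideanSpace ℝ (Fin n)) - ↑(P p) + m
          with hy
        have hz0 : ⟪(↑z : EuclideanSpace ℝ (Fin n)), v⟫ = 0 := by
          rw [hvt, real_inner_smul_right, real_inner_comm, huinner _ z.2, mul_zero]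
        have hp0 : ⟪(↑(P p) : EuclideanSpace ℝ (Fin n)), v⟫ = 0 := by
          rw [hvt, real_inner_smul_right, real_inner_comm, huinner _ (P p).2, mul_zero]
        have hyv : ⟪y, v⟫ = ⟪x₀, v⟫ := by
          rw [hy, inner_add_left, inner_sub_left, hz0, hp0, hmv]; ring
        have hydist : dist y m ≤ r := by
          have : dist y m = dist z (P p) := by
            rw [hy, Subtype.dist_eq, dist_eq_norm, dist_eq_norm, add_sub_cancel_right]
          rw [this]
          exact le_trans hz hRr
        have hyK : y ∈ K := by
          have : y ∈ K ∩ {y | ⟪y, v⟫ = ⟪x₀, v⟫} := by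
            rw [hset]; exact ⟨hyv, hydist⟩
          exact this.1
        refine ⟨y, hyK, ?_⟩
        apply Subtype.ext
        show Q y = ↑z
        rw [hy, hQadd, hQsub, hQm, hQid _ z.2, hQid _ (P p).2]
        abel
  · -- axis not parallel to ℓ : projection is a body of revolution
    intro hnp
    have hv' : Q v ≠ 0 := by
      intro h
      have hf := hQform v
      rw [h] at hf
      exact hnp ⟨⟪u, v⟫ / (‖u‖ ^ 2), sub_eq_zero.mp hf.symm⟩
    refine ⟨fun h => hv' (by show ((P v : U) : EuclideanSpace ℝ (Fin n)) = 0; rw [h, Submodule.coe_zero]), ?_⟩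
    intro c
    set v' : EuclideanSpace ℝ (Fin n) := Q v with hv'def
    have hQv' : Q v' = v' := hQid _ (hQmem v)
    have hxv' : ∀ x, ⟪Q x, v'⟫ = ⟪x, v'⟫ := fun x => by rw [hadj, hQv']
    set Kc : Set (EuclideanSpace ℝ (Fin n)) := K ∩ {x | ⟪x, v'⟫ = c} with hKcdef
    have htrans : ∀ z : U, (z ∈ P '' K ∧ ⟪z, P v⟫ = c) ↔ ((↑z : EuclideanSpace ℝ (Fin n)) ∈ Q '' Kc) := by
      intro z
      constructor
      · rintro ⟨⟨x, hxK, hPx⟩, hc⟩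
        have hQx : Q x = ↑z := congrArg Subtype.val hPx
        rw [Submodule.coe_inner] at hc
        refine ⟨x, ⟨hxK, ?_⟩, hQx⟩
        show ⟪x, v'⟫ = c
        rw [← hxv' x, hQx]
        exact hc
      · rintro ⟨x, ⟨hxK, hxc⟩, hQx⟩
        refine ⟨⟨x, hxK, Subtype.ext hQx⟩, ?_⟩
        rw [Submodule.coe_inner, ← hQx, hxv']
        exact hxc
    by_cases hKcE : Kc = ∅
    · left
      ext z
      simp only [Set.mem_empty_iff_false, iff_false, Set.mem_inter_iff]
      rintro ⟨h1, h2⟩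
      rcases (htrans z).mp ⟨h1, h2⟩ with ⟨x, hx, -⟩
      rw [hKcE] at hx
      exact hx.elim
    · right
      have hKcne : Kc.Nonempty := Set.nonempty_iff_ne_empty.mpr hKcE
      have hclosed : IsClosed {x : EuclideanSpace ℝ (Fin n) | ⟪x, v'⟫ = c} :=
        isClosed_eq (continuous_id.inner continuous_const) continuous_const
      have hKccomp : IsCompact Kc := hKcomp.inter_right hclosed
      have hKcconv : Convex ℝ Kc := hKconv.inter (by
        intro a ha b hb s t hs ht hst
        rw [Set.mem_setOf_eq] at ha hb
        show ⟪s • a + t • b, v'⟫ = c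
        rw [inner_add_left, real_inner_smul_left, real_inner_smul_left, ha, hb,
          ← add_mul, hst, one_mul])
      have hS'conv : Convex ℝ (Q '' Kc) :=
        hKcconv.is_linear_image ⟨hQadd, hQsmul⟩
      have hS'comp : IsCompact (Q '' Kc) := hKccomp.image hQcont
      have hS'ne : (Q '' Kc).Nonempty := hKcne.image Q
      set α : ℝ := (c - ⟪Q p, Q v⟫) / ⟪Q v, Q v⟫ with hα
      set m' : EuclideanSpace ℝ (Fin n) := Q p + α • v' with hm'
      have hvv' : ⟪v', v'⟫ ≠ 0 := inner_self_ne_zero.mpr hv'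
      have hm'v : ⟪m', v'⟫ = c := by
        rw [hm', inner_add_left, real_inner_smul_left, hα, hv'def,
          div_mul_cancel₀ _ hvv']
        ring
      have hm'U : m' ∈ U := U.add_mem (hQmem p) (U.smul_mem _ (hQmem v))
      obtain ⟨zs, hzsS, hmax⟩ := hS'comp.exists_isMaxOn hS'ne
        ((continuous_id.dist continuous_const).continuousOn
          (f := fun y => dist y m'))
      set r := dist zs m' with hrdef
      refine ⟨r, dist_nonneg, ?_⟩
      have hinv : ∀ (A : EuclideanSpace ℝ (Fin n) ≃ₗᵢ[ℝ] EuclideanSpace ℝ (Fin n)),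
          A u = u → A v = v → ∀ y ∈ Q '' Kc, Q p + A (y - Q p) ∈ Q '' Kc := by
        rintro A hAu hAv y ⟨x, hxKc, rfl⟩
        have hAv' : A v' = v' := by rw [hv'def, ← hcomm A hAu v, hAv]
        refine ⟨p + A (x - p), ⟨bor_invariant ⟨hv0, hslice⟩ A hAv hxKc.1, ?_⟩, ?_⟩
        · show ⟪p + A (x - p), v'⟫ = c
          have h1 : ⟪A (x - p), v'⟫ = ⟪x - p, v'⟫ := by
            conv_lhs => rw [← hAv']
            rw [A.inner_map_map]
          have h2 := hxKc.2
          rw [inner_add_left, h1, inner_sub_left]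
          simp only [Set.mem_setOf_eq] at h2
          linarith
        · show Q (p + A (x - p)) = Q p + A (Q x - Q p)
          rw [hQadd, hcomm A hAu, hQsub]
      have hmove : ∀ e₁ e₂ : EuclideanSpace ℝ (Fin n), ‖e₁‖ = ‖e₂‖ →
          ⟪u, e₁⟫ = 0 → ⟪u, e₂⟫ = 0 → ⟪v, e₁⟫ = 0 → ⟪v, e₂⟫ = 0 →
          m' + e₁ ∈ Q '' Kc → m' + e₂ ∈ Q '' Kc := by
        intro e₁ e₂ hn h1 h2 h3 h4 hmem
        obtain ⟨A, hAu, hAv, hAe⟩ := exists_isometry_fixing u v e₁ e₂ hn h1 h2 h3 h4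
        have hres := hinv A hAu hAv _ hmem
        have hAv' : A v' = v' := by rw [hv'def, ← hcomm A hAu v, hAv]
        have hexp : Q p + A (m' + e₁ - Q p) = m' + e₂ := by
          have hh : m' + e₁ - Q p = α • v' + e₁ := by rw [hm']; abel
          rw [hh, map_add, LinearIsometryEquiv.map_smul, hAv', hAe, hm']
          abel
        rwa [hexp] at hres
      -- orthogonality facts for elements of U ∩ (slice direction)
      have hperp : ∀ y : EuclideanSpace ℝ (Fin n), y ∈ U → ⟪y, v'⟫ = c →
          ⟪u, y - m'⟫ = 0 ∧ ⟪v, y - m'⟫ = 0 := by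
        intro y hyU hyc
        have hgU : y - m' ∈ U := U.sub_mem hyU hm'U
        constructor
        · exact huinner _ hgU
        · have h0 : ⟪y - m', v'⟫ = 0 := by rw [inner_sub_left, hyc, hm'v, sub_self]
          rw [real_inner_comm, ← hQid _ hgU, hadj, ← hv'def]
          exact h0
      -- the key geometric claim in the ambient space
      have hmain : ∀ y : EuclideanSpace ℝ (Fin n), y ∈ U → ⟪y, v'⟫ = c →
          dist y m' ≤ r → y ∈ Q '' Kc := by
        intro y hyU hyc hyd
        obtain ⟨xs, hxsKc, hxs⟩ := id hzsS
        have hzsU : zs ∈ U := hxs ▸ hQmem xs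
        have hzsc : ⟪zs, v'⟫ = c := by rw [← hxs, hxv']; exact hxsKc.2
        obtain ⟨hue, hve⟩ := hperp y hyU hyc
        obtain ⟨hues, hves⟩ := hperp zs hzsU hzsc
        have hnes : ‖zs - m'‖ = r := by rw [hrdef, dist_eq_norm]
        have hne : ‖y - m'‖ = dist y m' := by rw [dist_eq_norm]
        by_cases hr0 : r = 0
        · have hy0 : y = m' := by
            have : dist y m' = 0 := le_antisymm (hr0 ▸ hyd) dist_nonneg
            exact dist_eq_zero.mp this
          have hzs0 : zs = m' := dist_eq_zero.mp hr0
          rw [hy0, ← hzs0]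
          exact hzsS
        · have hrpos : 0 < r := lt_of_le_of_ne dist_nonneg (Ne.symm hr0)
          set d := dist y m' with hd
          have hd0 : 0 ≤ d := dist_nonneg
          have hdr : d / r ≤ 1 := (div_le_one hrpos).mpr hyd
          have hdr0 : 0 ≤ d / r := div_nonneg hd0 hrpos.le
          -- step 1 : the antipode of zs is in the projection
          have hstep1 : m' + (-(zs - m')) ∈ Q '' Kc := by
            apply hmove (zs - m') (-(zs - m')) (norm_neg _).symm hues
              (by rw [inner_neg_right, hues, neg_zero]) hves
              (by rw [inner_neg_right, hves, neg_zero])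
            have : m' + (zs - m') = zs := by abel
            rw [this]
            exact hzsS
          -- step 2 : convexity gives the point at distance d on the segment
          have hstep2 : m' + (d / r) • (zs - m') ∈ Q '' Kc := by
            have ha : (0:ℝ) ≤ (1 + d / r) / 2 := by linarith
            have hb : (0:ℝ) ≤ (1 - d / r) / 2 := by linarith
            have hab : (1 + d / r) / 2 + (1 - d / r) / 2 = 1 := by ring
            have hcomb := hS'conv hzsS hstep1 ha hb hab
            have heq : ((1 + d / r) / 2) • zs + ((1 - d / r) / 2) • (m' + (-(zs - m')))
                = m' + (d / r) • (zs - m') := by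
              have hzsr : zs = m' + (zs - m') := by abel
              rw [hzsr]
              module
            rwa [heq] at hcomb
          -- step 3 : rotate to reach y
          have hnorm3 : ‖(d / r) • (zs - m')‖ = ‖y - m'‖ := by
            rw [norm_smul, hnes, Real.norm_eq_abs, abs_of_nonneg hdr0,
              div_mul_cancel₀ _ hr0, hne]
          have hstep3 : m' + (y - m') ∈ Q '' Kc := by
            apply hmove ((d / r) • (zs - m')) (y - m') hnorm3
              (by rw [real_inner_smul_right, hues, mul_zero]) hue
              (by rw [real_inner_smul_right, hves, mul_zero]) hve hstep2
          have : m' + (y - m') = y := by abel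
          rwa [this] at hstep3
      -- assemble the set equality
      ext z
      simp only [Set.mem_inter_iff, Set.mem_setOf_eq]
      have hqcoe : ((P p + ((c - ⟪P p, P v⟫) / ⟪P v, P v⟫) • P v : U) : EuclideanSpace ℝ (Fin n)) = m' := by
        push_cast
        rw [Submodule.coe_inner, Submodule.coe_inner, hm', hα, hv'def]
      constructor
      · intro hmem
        obtain ⟨x, hxKc, hQx⟩ := (htrans z).mp hmem
        constructor
        · show ⟪z, P v⟫ = c
          rw [Submodule.coe_inner, ← hQx, hxv']
          exact hxKc.2
        · rw [Subtype.dist_eq, hqcoe, ← hQx]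
          have : Q x ∈ Q '' Kc := ⟨x, hxKc, rfl⟩
          exact hmax this
      · rintro ⟨h1, h2⟩
        apply (htrans z).mpr
        apply hmain (↑z) z.2
        · rw [Submodule.coe_inner] at h1
          exact h1
        · rw [Subtype.dist_eq, hqcoe] at h2
          exact h2
end

section
/- Let n ≥ 3 and let K ⊂ ℝ^n be an affine body of revolution with hyperplane of revolution H. Let ℓ be a 1-dimensional linear subspace of ℝ^n parallel to H (i.e., ℓ is contained in the direction hyperplane of H), and let π : ℝ^n → ℓ⊥ be the orthogonal projection along ℓ. If π(K) is an ellipsoid, then K is an ellipsoid. -/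
open scoped RealInnerProductSpace

/- ### Auxiliary material -/

noncomputable section Aux

open scoped RealInnerProductSpace

variable {W : Type*} [NormedAddCommGroup W] [InnerProductSpace ℝ W]

/-- projection onto the v-component -/
def projL (v : W) : W →ₗ[ℝ] W where
  toFun y := ⟪y, v⟫ • v
  map_add' x y := by simp [inner_add_left, add_smul]
  map_smul' c x := by simp [real_inner_smul_left, mul_smul]

def scaleMap (v : W) (c₁ c₂ : ℝ) : W →ₗ[ℝ] W := c₂ • LinearMap.id + (c₁ - c₂) • projL v

lemma scaleMap_apply (v : W) (c₁ c₂ : ℝ) (y : W) :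
    scaleMap v c₁ c₂ y = c₂ • y + (c₁ - c₂) • ⟪y, v⟫ • v := rfl

lemma inner_scaleMap (v : W) (hv : ⟪v, v⟫ = 1) (c₁ c₂ : ℝ) (y : W) :
    ⟪scaleMap v c₁ c₂ y, v⟫ = c₁ * ⟪y, v⟫ := by
  simp [scaleMap_apply, inner_add_left, real_inner_smul_left, hv]; rw [← real_inner_self_eq_norm_sq, hv]; ring

lemma scaleMap_comp (v : W) (hv : ⟪v, v⟫ = 1) (c₁ c₂ d₁ d₂ : ℝ) :
    (scaleMap v c₁ c₂) ∘ₗ (scaleMap v d₁ d₂) = scaleMap v (c₁ * d₁) (c₂ * d₂) := by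
  ext y
  simp only [LinearMap.comp_apply, scaleMap_apply]
  rw [show (⟪d₂ • y + (d₁ - d₂) • ⟪y, v⟫ • v, v⟫ : ℝ) = d₁ * ⟪y, v⟫ by
    rw [← scaleMap_apply]; exact inner_scaleMap v hv _ _ _]
  match_scalars <;> ring

lemma scaleMap_one (v : W) : scaleMap v 1 1 = LinearMap.id := by
  ext y; simp [scaleMap_apply]

def scaleEquiv (v : W) (hv : ⟪v, v⟫ = 1) (c₁ c₂ : ℝ) (h₁ : c₁ ≠ 0) (h₂ : c₂ ≠ 0) :
    W ≃ₗ[ℝ] W :=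
  LinearEquiv.ofLinear (scaleMap v c₁ c₂) (scaleMap v c₁⁻¹ c₂⁻¹)
    (by rw [scaleMap_comp v hv, mul_inv_cancel₀ h₁, mul_inv_cancel₀ h₂, scaleMap_one])
    (by rw [scaleMap_comp v hv, inv_mul_cancel₀ h₁, inv_mul_cancel₀ h₂, scaleMap_one])

lemma scaleEquiv_apply (v : W) (hv : ⟪v, v⟫ = 1) (c₁ c₂ : ℝ) (h₁ : c₁ ≠ 0) (h₂ : c₂ ≠ 0)
    (y : W) : scaleEquiv v hv c₁ c₂ h₁ h₂ y = c₂ • y + (c₁ - c₂) • ⟪y, v⟫ • v := rfl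

lemma pyth (v y : W) (hv : ⟪v, v⟫ = 1) :
    ‖y‖ ^ 2 = ⟪y, v⟫ ^ 2 + ‖y - ⟪y, v⟫ • v‖ ^ 2 := by
  have h := norm_sub_sq_real y (⟪y, v⟫ • v)
  rw [real_inner_smul_right] at h
  rw [norm_smul, Real.norm_eq_abs] at h
  have hv1 : ‖v‖ ^ 2 = 1 := by rw [← real_inner_self_eq_norm_sq, hv]
  nlinarith [h, sq_abs (⟪y, v⟫)]

lemma norm_add_smul_sq (a b : W) (s : ℝ) :
    ‖a + s • b‖ ^ 2 = ‖a‖ ^ 2 + 2 * ⟪a, b⟫ * s + ‖b‖ ^ 2 * s ^ 2 := by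
  have h := norm_add_sq_real a (s • b)
  rw [real_inner_smul_right, norm_smul, Real.norm_eq_abs] at h
  nlinarith [h, sq_abs s]

lemma symm_interval {A L B r : ℝ} (hB : 0 < B) (hr : 0 < r)
    (h : ∀ s : ℝ, A + L * s + B * s ^ 2 ≤ 1 ↔ |s| ≤ r) : L = 0 := by
  have h1 : A + L * r + B * r ^ 2 ≤ 1 := (h r).2 (by rw [abs_of_pos hr])
  have h2 : A + L * (-r) + B * (-r) ^ 2 ≤ 1 := (h (-r)).2 (by rw [abs_neg, abs_of_pos hr])
  have e1 : A + L * (-L / B - r) + B * (-L / B - r) ^ 2 = A + L * r + B * r ^ 2 := by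
    field_simp; ring
  have e2 : A + L * (-L / B + r) + B * (-L / B + r) ^ 2 = A + L * (-r) + B * (-r) ^ 2 := by
    field_simp; ring
  have k1 : |(-L / B - r)| ≤ r := (h _).1 (by rw [e1]; exact h1)
  have k2 : |(-L / B + r)| ≤ r := (h _).1 (by rw [e2]; exact h2)
  rw [abs_le] at k1 k2
  have hL1 : -L / B ≥ 0 := by linarith [k1.1]
  have hL2 : -L / B ≤ 0 := by linarith [k2.2]
  have h0 : -L / B = 0 := le_antisymm hL2 hL1
  field_simp at h0; linarith

lemma aux_div (A C D : ℝ) (hA : A ≠ 0) : (A - A * C + D) / A = 1 - C + D / A := by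
  field_simp

lemma aux_sq (A b t : ℝ) (hA : A ≠ 0) :
    A * (t + b / A) ^ 2 = A * t ^ 2 + 2 * b * t + b ^ 2 / A := by
  field_simp
  ring

lemma bor_unit {K : Set W} {v : W} (h : IsBodyOfRevolutionAxis K 0 v) :
    IsBodyOfRevolutionAxis K 0 (‖v‖⁻¹ • v) := by
  obtain ⟨hv, hsec⟩ := h
  have hn : ‖v‖ ≠ 0 := norm_ne_zero_iff.2 hv
  refine ⟨smul_ne_zero (inv_ne_zero hn) hv, fun c => ?_⟩
  have hset : {y : W | ⟪y, ‖v‖⁻¹ • v⟫ = c} = {y : W | ⟪y, v⟫ = ‖v‖ * c} := by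
    ext y
    rw [Set.mem_setOf_eq, Set.mem_setOf_eq, real_inner_smul_right]
    constructor <;> intro h' <;> field_simp at h' ⊢ <;> linarith
  have hcen : (0 : W) + ((c - ⟪(0 : W), ‖v‖⁻¹ • v⟫) / ⟪‖v‖⁻¹ • v, ‖v‖⁻¹ • v⟫) • (‖v‖⁻¹ • v)
      = (0 : W) + ((‖v‖ * c - ⟪(0 : W), v⟫) / ⟪v, v⟫) • v := by
    simp only [inner_zero_left, sub_zero, real_inner_smul_left, real_inner_smul_right,
      smul_smul, zero_add]
    rw [real_inner_self_eq_norm_sq]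
    congr 1
    field_simp
  rw [hset, hcen]
  exact hsec (‖v‖ * c)

end Aux
set_option maxHeartbeats 1600000000 in
open scoped RealInnerProductSpace in
/-- If K ⊂ ℝ^n is an affine body of revolution with hyperplane of
revolution H, and the orthogonal projection of K along a line ℓ = ℝ∙u parallel to H
is an ellipsoid, then K is an ellipsoid. -/
theorem stmt_9 (n : ℕ) (hn : 3 ≤ n)
    (K : Set (EuclideanSpace ℝ (Fin n))) (hK : IsConvexBody K)
    (H : Set (EuclideanSpace ℝ (Fin n)))
    (hrev : ∃ L : Set (EuclideanSpace ℝ (Fin n)), IsAffineBORAxisHyp K L H)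
    (u : EuclideanSpace ℝ (Fin n)) (hu : u ≠ 0)
    (hpar : ∀ y ∈ H, y + u ∈ H)
    (hell : IsEllipsoid ((Submodule.orthogonalProjectionOnto ((ℝ ∙ u)ᗮ)) '' K)) :
    IsEllipsoid K := by
  classical
  obtain ⟨Lax, g, v₀, hbor₀, -, hH⟩ := hrev
  obtain ⟨equ, hequ⟩ := hell
  have hv₀ : v₀ ≠ 0 := hbor₀.1
  have hn₀ : ‖v₀‖ ≠ 0 := norm_ne_zero_iff.2 hv₀
  set v : EuclideanSpace ℝ (Fin n) := ‖v₀‖⁻¹ • v₀ with hvdef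
  have hbor : IsBodyOfRevolutionAxis (g '' K) 0 v := bor_unit hbor₀
  have hvnorm : ‖v‖ = 1 := norm_smul_inv_norm hv₀
  have hvv : ⟪v, v⟫ = 1 := by rw [real_inner_self_eq_norm_sq, hvnorm]; norm_num
  have hvne : v ≠ 0 := fun h => by rw [h, norm_zero] at hvnorm; norm_num at hvnorm
  set u' : EuclideanSpace ℝ (Fin n) := g.linear u with hu'def
  have hu' : u' ≠ 0 := by
    rw [hu'def]
    exact fun h => hu (g.linear.map_eq_zero_iff.1 h)
  -- u' is orthogonal to the axis direction
  have hu'v₀ : ⟪u', v₀⟫ = 0 := by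
    have hHne : H.Nonempty := by
      have h0 : (0 : EuclideanSpace ℝ (Fin n)) ∈ g '' H := by
        rw [hH]; simp
      obtain ⟨y, hy, -⟩ := h0
      exact ⟨y, hy⟩
    obtain ⟨y, hy⟩ := hHne
    have h1 : ⟪g y, v₀⟫ = 0 := by
      have : g y ∈ g '' H := Set.mem_image_of_mem _ hy
      rw [hH] at this; exact this
    have h2 : ⟪g (y + u), v₀⟫ = 0 := by
      have : g (y + u) ∈ g '' H := Set.mem_image_of_mem _ (hpar y hy)
      rw [hH] at this; exact this
    have h3 : g (y + u) = g.linear u + g y := by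
      have := g.map_vadd y u
      simpa [add_comm] using this
    rw [h3, inner_add_left, h1, add_zero] at h2
    exact h2
  have hu'v : ⟪u', v⟫ = 0 := by rw [hvdef, real_inner_smul_right, hu'v₀, mul_zero]
  have hvS' : v ∈ (ℝ ∙ u')ᗮ := Submodule.mem_orthogonal_singleton_iff_inner_right.2 hu'v
  -- a third orthogonal direction
  obtain ⟨e, heS, hev, henorm⟩ :
      ∃ e : EuclideanSpace ℝ (Fin n), e ∈ (ℝ ∙ u')ᗮ ∧ ⟪e, v⟫ = 0 ∧ ‖e‖ = 1 := by
    set T := (Submodule.span ℝ ({v, u'} : Set (EuclideanSpace ℝ (Fin n))))ᗮ with hT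
    have hTne : T ≠ ⊥ := by
      intro hbot
      have h1 := Submodule.finrank_add_finrank_orthogonal
        (Submodule.span ℝ ({v, u'} : Set (EuclideanSpace ℝ (Fin n))))
      have h2 : Module.finrank ℝ
          (Submodule.span ℝ ({v, u'} : Set (EuclideanSpace ℝ (Fin n)))) ≤ 2 := by
        refine le_trans (finrank_span_le_card _) ?_
        rw [Set.toFinset_insert, Set.toFinset_singleton]
        exact le_trans (Finset.card_insert_le _ _) (by simp)
      rw [← hT, hbot] at h1
      rw [finrank_bot] at h1
      have h3 : Module.finrank ℝ (EuclideanSpace ℝ (Fin n)) = n :=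
        finrank_euclideanSpace_fin
      omega
    obtain ⟨e₀, he₀T, he₀⟩ := Submodule.exists_mem_ne_zero_of_ne_bot hTne
    have hn₀' : ‖e₀‖ ≠ 0 := norm_ne_zero_iff.2 he₀
    have hperp : ∀ w ∈ ({v, u'} : Set (EuclideanSpace ℝ (Fin n))), ⟪w, e₀⟫ = 0 := by
      intro w hw
      exact he₀T _ (Submodule.subset_span hw)
    have hpv : ⟪v, e₀⟫ = 0 := hperp v (by simp)
    have hpu : ⟪u', e₀⟫ = 0 := hperp u' (by simp)
    refine ⟨‖e₀‖⁻¹ • e₀, ?_, ?_, norm_smul_inv_norm he₀⟩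
    · refine Submodule.mem_orthogonal_singleton_iff_inner_right.2 ?_
      rw [real_inner_smul_right, hpu, mul_zero]
    · rw [real_inner_smul_left, real_inner_comm, hpv, mul_zero]
  have heu : ⟪u', e⟫ = 0 := Submodule.mem_orthogonal_singleton_iff_inner_right.1 heS
  have hene : e ≠ 0 := fun h => by rw [h, norm_zero] at henorm; norm_num at henorm
  -- the affine equivalence between the two projection hyperplane spaces
  have hgx : ∀ x : EuclideanSpace ℝ (Fin n), g x = g.linear x + g 0 := by
    intro x
    have := g.map_vadd 0 x
    simpa using this
  have hS'perp : ((ℝ ∙ u')ᗮ)ᗮ = ℝ ∙ u' := Submodule.orthogonal_orthogonal _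
  have hglin_spanu : ∀ w ∈ (ℝ ∙ u), g.linear w ∈ (ℝ ∙ u') := by
    intro w hw
    obtain ⟨c, rfl⟩ := Submodule.mem_span_singleton.1 hw
    exact Submodule.mem_span_singleton.2 ⟨c, by rw [hu'def, map_smul]⟩
  have hpr'_killu' : ∀ w ∈ (ℝ ∙ u'), Submodule.orthogonalProjectionOnto (ℝ ∙ u')ᗮ w = 0 := by
    intro w hw
    exact Submodule.orthogonalProjectionOnto_apply_of_mem_orthogonal
      (Submodule.le_orthogonal_orthogonal _ hw)
  set ℓψ : ((ℝ ∙ u)ᗮ : Submodule ℝ (EuclideanSpace ℝ (Fin n))) →ₗ[ℝ] ((ℝ ∙ u')ᗮ : Submodule ℝ (EuclideanSpace ℝ (Fin n))) :=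
    ((Submodule.orthogonalProjectionOnto (ℝ ∙ u')ᗮ).toLinearMap.comp
      (g.linear.toLinearMap.comp ((ℝ ∙ u)ᗮ).subtype)) with hℓψdef
  have hℓψ_apply : ∀ x : ((ℝ ∙ u)ᗮ : Submodule ℝ (EuclideanSpace ℝ (Fin n))),
      ℓψ x = Submodule.orthogonalProjectionOnto (ℝ ∙ u')ᗮ (g.linear ↑x) := fun x => rfl
  have hinj : Function.Injective ℓψ := by
    rw [injective_iff_map_eq_zero]
    intro x hx
    rw [hℓψ_apply] at hx
    have hmem : g.linear ↑x ∈ (ℝ ∙ u') := by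
      have h1 : g.linear ↑x - ↑(Submodule.orthogonalProjectionOnto (ℝ ∙ u')ᗮ (g.linear ↑x)) ∈ ((ℝ ∙ u')ᗮ)ᗮ :=
          Submodule.sub_starProjection_mem_orthogonal (K := (ℝ ∙ u')ᗮ) (g.linear ↑x)
      rw [hx] at h1
      rw [← hS'perp]
      simpa using h1
    obtain ⟨c, hc⟩ := Submodule.mem_span_singleton.1 hmem
    have hxc : (↑x : EuclideanSpace ℝ (Fin n)) = c • u := by
      apply g.linear.injective
      rw [map_smul, ← hu'def, hc]
    have hxo : (↑x : EuclideanSpace ℝ (Fin n)) ∈ (ℝ ∙ u)ᗮ := x.2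
    have : ⟪(↑x : EuclideanSpace ℝ (Fin n)), ↑x⟫ = 0 := by
      nth_rewrite 1 [hxc]
      exact hxo (c • u) (Submodule.mem_span_singleton.2 ⟨c, rfl⟩)
    have h0 : (↑x : EuclideanSpace ℝ (Fin n)) = 0 := by
      rwa [inner_self_eq_zero] at this
    exact Subtype.ext h0
  have hdim : Module.finrank ℝ ((ℝ ∙ u)ᗮ : Submodule ℝ (EuclideanSpace ℝ (Fin n)))
      = Module.finrank ℝ ((ℝ ∙ u')ᗮ : Submodule ℝ (EuclideanSpace ℝ (Fin n))) := by
    have h1 := Submodule.finrank_add_finrank_orthogonal (ℝ ∙ u)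
    have h2 := Submodule.finrank_add_finrank_orthogonal (ℝ ∙ u')
    rw [finrank_span_singleton hu] at h1
    rw [finrank_span_singleton hu'] at h2
    omega
  set ψ₀ := ℓψ.linearEquivOfInjective hinj hdim with hψ₀def
  set ψ : ((ℝ ∙ u)ᗮ : Submodule ℝ (EuclideanSpace ℝ (Fin n))) ≃ᵃ[ℝ]
      ((ℝ ∙ u')ᗮ : Submodule ℝ (EuclideanSpace ℝ (Fin n))) :=
    ψ₀.toAffineEquiv.trans
      (AffineEquiv.constVAdd ℝ _ (Submodule.orthogonalProjectionOnto (ℝ ∙ u')ᗮ (g 0))) with hψdef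
  have hψ_apply : ∀ x : ((ℝ ∙ u)ᗮ : Submodule ℝ (EuclideanSpace ℝ (Fin n))),
      ψ x = Submodule.orthogonalProjectionOnto (ℝ ∙ u')ᗮ (g 0)
        + Submodule.orthogonalProjectionOnto (ℝ ∙ u')ᗮ (g.linear ↑x) := by
    intro x
    rw [hψdef]
    simp only [AffineEquiv.trans_apply, LinearEquiv.coe_toAffineEquiv,
      AffineEquiv.constVAdd_apply, vadd_eq_add]
    rw [hψ₀def, ℓψ.linearEquivOfInjective_apply, hℓψ_apply]
  have hψπ : ∀ x : EuclideanSpace ℝ (Fin n),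
      ψ (Submodule.orthogonalProjectionOnto (ℝ ∙ u)ᗮ x) = Submodule.orthogonalProjectionOnto (ℝ ∙ u')ᗮ (g x) := by
    intro x
    rw [hψ_apply]
    have hco : ((Submodule.orthogonalProjectionOnto (ℝ ∙ u)ᗮ x : EuclideanSpace ℝ (Fin n)))
        = x - Submodule.orthogonalProjectionOnto (ℝ ∙ u) x := Submodule.starProjection_orthogonal_val x
    have h1 : g.linear ((Submodule.orthogonalProjectionOnto (ℝ ∙ u)ᗮ x : EuclideanSpace ℝ (Fin n)))
        = g.linear x - g.linear (Submodule.orthogonalProjectionOnto (ℝ ∙ u) x) := by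
      rw [hco, map_sub]
    rw [h1, map_sub]
    have hz : Submodule.orthogonalProjectionOnto (ℝ ∙ u')ᗮ
        (g.linear ((Submodule.orthogonalProjectionOnto (ℝ ∙ u) x : EuclideanSpace ℝ (Fin n)))) = 0 :=
      hpr'_killu' _ (hglin_spanu _ (SetLike.coe_mem _))
    rw [hz, sub_zero, hgx x, map_add, add_comm]
  set P := Submodule.orthogonalProjectionOnto (ℝ ∙ u')ᗮ '' (g '' K) with hPdef
  have hPψ : P = ψ '' ((Submodule.orthogonalProjectionOnto (ℝ ∙ u)ᗮ) '' K) := by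
    rw [hPdef, Set.image_image, Set.image_image]
    exact (Set.image_congr fun x _ => (hψπ x)).symm
  set G := equ.trans ψ with hGdef
  have hPG : P = G '' Metric.closedBall 0 1 := by
    rw [hPψ, hequ, hGdef, ← Set.image_comp, ← AffineEquiv.coe_trans]
  set F := G.symm with hFdef
  have hPmem : ∀ z : ((ℝ ∙ u')ᗮ : Submodule ℝ (EuclideanSpace ℝ (Fin n))),
      z ∈ P ↔ ‖F z‖ ≤ 1 := by
    intro z
    rw [hPG]
    constructor
    · rintro ⟨y, hy, rfl⟩
      rw [hFdef]
      rw [AffineEquiv.symm_apply_apply]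
      exact mem_closedBall_zero_iff.1 hy
    · intro hz
      exact ⟨F z, mem_closedBall_zero_iff.2 hz, by rw [hFdef, AffineEquiv.apply_symm_apply]⟩
  -- points of the projection hyperplane
  set vb : ((ℝ ∙ u')ᗮ : Submodule ℝ (EuclideanSpace ℝ (Fin n))) := ⟨v, hvS'⟩ with hvbdef
  set eb : ((ℝ ∙ u')ᗮ : Submodule ℝ (EuclideanSpace ℝ (Fin n))) := ⟨e, heS⟩ with hebdef
  have hcoez : ∀ t s : ℝ,
      ((t • vb + s • eb : ((ℝ ∙ u')ᗮ : Submodule ℝ (EuclideanSpace ℝ (Fin n))))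
        : EuclideanSpace ℝ (Fin n)) = t • v + s • e := by
    intro t s; simp [hvbdef, hebdef]
  have hinner_z : ∀ t s : ℝ, ⟪t • v + s • e, v⟫ = t := by
    intro t s
    simp only [inner_add_left, real_inner_smul_left, hvv, hev]
    ring
  have hinner_proj : ∀ x : EuclideanSpace ℝ (Fin n),
      ⟪((Submodule.orthogonalProjectionOnto (ℝ ∙ u')ᗮ x : EuclideanSpace ℝ (Fin n))), v⟫ = ⟪x, v⟫ := by
    intro x
    have h1 : x - Submodule.orthogonalProjectionOnto (ℝ ∙ u')ᗮ x ∈ (ℝ ∙ u') := by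
      have h0 := Submodule.sub_starProjection_mem_orthogonal (K := (ℝ ∙ u')ᗮ) x
      rwa [hS'perp] at h0
    obtain ⟨c, hc⟩ := Submodule.mem_span_singleton.1 h1
    have h2 : ⟪x - Submodule.orthogonalProjectionOnto (ℝ ∙ u')ᗮ x, v⟫ = 0 := by
      rw [← hc, real_inner_smul_left, hu'v, mul_zero]
    rw [inner_sub_left] at h2
    linarith
  have hprle : ∀ w : EuclideanSpace ℝ (Fin n),
      ‖Submodule.orthogonalProjectionOnto (ℝ ∙ u')ᗮ w‖ ≤ ‖w‖ := by
    intro w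
    calc ‖Submodule.orthogonalProjectionOnto (ℝ ∙ u')ᗮ w‖
        ≤ ‖Submodule.orthogonalProjectionOnto (ℝ ∙ u')ᗮ‖ * ‖w‖ :=
          (Submodule.orthogonalProjectionOnto (ℝ ∙ u')ᗮ).le_opNorm w
      _ ≤ 1 * ‖w‖ := mul_le_mul_of_nonneg_right (Submodule.orthogonalProjectionOnto_norm_le _) (norm_nonneg w)
      _ = ‖w‖ := one_mul _
  have hprojself : ∀ z : ((ℝ ∙ u')ᗮ : Submodule ℝ (EuclideanSpace ℝ (Fin n))),
      Submodule.orthogonalProjectionOnto (ℝ ∙ u')ᗮ (z : EuclideanSpace ℝ (Fin n)) = z :=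
    fun z => Submodule.orthogonalProjectionOnto_mem_subspace_eq_self z
  -- slice dichotomy for the body of revolution
  have hslice : ∀ t : ℝ, ((g '' K) ∩ {y | ⟪y, v⟫ = t} = ∅) ∨
      ∃ r, 0 ≤ r ∧ (g '' K) ∩ {y | ⟪y, v⟫ = t}
        = {y | ⟪y, v⟫ = t ∧ dist y (t • v) ≤ r} := by
    intro t
    have hq : (0 : EuclideanSpace ℝ (Fin n))
        + ((t - ⟪(0 : EuclideanSpace ℝ (Fin n)), v⟫) / ⟪v, v⟫) • v = t • v := by
      rw [inner_zero_left, sub_zero, hvv, div_one, zero_add]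
    rcases hbor.2 t with h | ⟨r, hr, hset⟩
    · left; exact h
    · right
      refine ⟨r, hr, ?_⟩
      rw [hset, hq, Set.sep_setOf]
  have hball_iff : ∀ {t r : ℝ}, ((g '' K) ∩ {y | ⟪y, v⟫ = t}
        = {y | ⟪y, v⟫ = t ∧ dist y (t • v) ≤ r}) →
      ∀ x : EuclideanSpace ℝ (Fin n), ⟪x, v⟫ = t → (x ∈ g '' K ↔ dist x (t • v) ≤ r) := by
    intro t r hset x hx
    constructor
    · intro hxK
      have hm : x ∈ (g '' K) ∩ {y | ⟪y, v⟫ = t} := ⟨hxK, hx⟩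
      rw [hset] at hm
      exact hm.2
    · intro hd
      have hm : x ∈ {y : EuclideanSpace ℝ (Fin n) | ⟪y, v⟫ = t ∧ dist y (t • v) ≤ r} :=
        ⟨hx, hd⟩
      rw [← hset] at hm
      exact hm.1
  have hLemPempty : ∀ t s : ℝ, ((g '' K) ∩ {y | ⟪y, v⟫ = t} = ∅) →
      (t • vb + s • eb) ∉ P := by
    intro t s hemp hmem
    rw [hPdef] at hmem
    obtain ⟨x, hxK, hxp⟩ := hmem
    have hxt : ⟪x, v⟫ = t := by
      have h1 := hinner_proj x
      rw [hxp, hcoez, hinner_z] at h1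
      exact h1.symm
    have hm : x ∈ (g '' K) ∩ {y | ⟪y, v⟫ = t} := ⟨hxK, hxt⟩
    rw [hemp] at hm
    exact hm
  have hLemP : ∀ t r : ℝ, 0 ≤ r →
      ((g '' K) ∩ {y | ⟪y, v⟫ = t} = {y | ⟪y, v⟫ = t ∧ dist y (t • v) ≤ r}) →
      ∀ s : ℝ, ((t • vb + s • eb) ∈ P ↔ |s| ≤ r) := by
    intro t r hr hset s
    have hebn : ‖eb‖ = (1:ℝ) := by
      rw [show ‖eb‖ = ‖(eb : EuclideanSpace ℝ (Fin n))‖ from rfl, hebdef]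
      exact henorm
    constructor
    · rintro ⟨x, hxK, hxp⟩
      have hxt : ⟪x, v⟫ = t := by
        have h1 := hinner_proj x
        rw [hxp, hcoez, hinner_z] at h1
        exact h1.symm
      have hdx : dist x (t • v) ≤ r := (hball_iff hset x hxt).1 hxK
      have htv : Submodule.orthogonalProjectionOnto (ℝ ∙ u')ᗮ (t • v) = t • vb := by
        have h5 := hprojself (t • vb)
        rwa [show ((t • vb : ((ℝ ∙ u')ᗮ : Submodule ℝ (EuclideanSpace ℝ (Fin n))))
          : EuclideanSpace ℝ (Fin n)) = t • v by simp [hvbdef]] at h5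
      have hkey : (t • vb + s • eb) - t • vb
          = Submodule.orthogonalProjectionOnto (ℝ ∙ u')ᗮ (x - t • v) := by
        rw [map_sub, hxp, htv]
      have h2 : ‖(t • vb + s • eb) - t • vb‖ ≤ ‖x - t • v‖ := by
        rw [hkey]; exact hprle _
      have h3 : (t • vb + s • eb) - t • vb = s • eb := by abel
      rw [h3, norm_smul, Real.norm_eq_abs, hebn, mul_one] at h2
      calc |s| ≤ ‖x - t • v‖ := h2
        _ = dist x (t • v) := (dist_eq_norm _ _).symm
        _ ≤ r := hdx
    · intro hs
      refine ⟨t • v + s • e, ?_, ?_⟩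
      · have h1 : ⟪t • v + s • e, v⟫ = t := hinner_z t s
        have h2 : dist (t • v + s • e) (t • v) ≤ r := by
          rw [dist_eq_norm]
          have h6 : t • v + s • e - t • v = s • e := by abel
          rw [h6, norm_smul, Real.norm_eq_abs, henorm, mul_one]
          exact hs
        have hm : (t • v + s • e)
            ∈ {y : EuclideanSpace ℝ (Fin n) | ⟪y, v⟫ = t ∧ dist y (t • v) ≤ r} := ⟨h1, h2⟩
        rw [← hset] at hm
        exact hm.1
      · rw [← hcoez t s]
        exact hprojself _
  have hmaster : ∀ x : EuclideanSpace ℝ (Fin n),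
      x ∈ g '' K ↔ (⟪x, v⟫ • vb + ‖x - ⟪x, v⟫ • v‖ • eb) ∈ P := by
    intro x
    rcases hslice ⟪x, v⟫ with hemp | ⟨r, hr, hset⟩
    · constructor
      · intro hx
        exfalso
        have hm : x ∈ (g '' K) ∩ {y | ⟪y, v⟫ = ⟪x, v⟫} := ⟨hx, rfl⟩
        rw [hemp] at hm; exact hm
      · intro hz
        exact absurd hz (hLemPempty _ _ hemp)
    · rw [hLemP _ r hr hset]
      rw [hball_iff hset x rfl, dist_eq_norm, abs_of_nonneg (norm_nonneg _)]
  -- the quadratic function coming from the ellipsoid structure of the projection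
  set a₀ := F 0 with ha₀def
  set a₁ := F.linear vb with ha₁def
  set a₂ := F.linear eb with ha₂def
  have hFlin : ∀ t s : ℝ, F (t • vb + s • eb) = a₀ + t • a₁ + s • a₂ := by
    intro t s
    have h1 := F.map_vadd 0 (t • vb + s • eb)
    rw [vadd_eq_add, add_zero, vadd_eq_add] at h1
    rw [h1, map_add, map_smul, map_smul]
    abel
  have hPiff : ∀ t s : ℝ, ((t • vb + s • eb) ∈ P
      ↔ ‖a₀ + t • a₁‖ ^ 2 + 2 * ⟪a₀ + t • a₁, a₂⟫ * s + ‖a₂‖ ^ 2 * s ^ 2 ≤ 1) := by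
    intro t s
    rw [hPmem, hFlin, show a₀ + t • a₁ + s • a₂ = (a₀ + t • a₁) + s • a₂ from rfl,
      ← pow_le_one_iff_of_nonneg (norm_nonneg _) (two_ne_zero), norm_add_smul_sq]
  -- interior point
  obtain ⟨x₀, ε, hε, hball⟩ : ∃ (x₀ : EuclideanSpace ℝ (Fin n)) (ε : ℝ),
      0 < ε ∧ Metric.ball x₀ ε ⊆ g '' K := by
    obtain ⟨x₀', hx₀'⟩ := hK.2.2
    have hmem : g x₀' ∈ interior (g '' K) := by
      have h2 := Homeomorph.image_interior g.toHomeomorphOfFiniteDimensional K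
      rw [AffineEquiv.coe_toHomeomorphOfFiniteDimensional] at h2
      rw [← h2]
      exact Set.mem_image_of_mem _ hx₀'
    rw [mem_interior_iff_mem_nhds, Metric.mem_nhds_iff] at hmem
    obtain ⟨ε, hε, hb⟩ := hmem
    exact ⟨g x₀', ε, hε, hb⟩
  set t₀ := ⟪x₀, v⟫ with ht₀def
  have hposslice : ∀ t : ℝ, |t - t₀| ≤ ε / 2 →
      ∃ r, 0 < r ∧ (g '' K) ∩ {y | ⟪y, v⟫ = t}
        = {y | ⟪y, v⟫ = t ∧ dist y (t • v) ≤ r} := by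
    intro t ht
    have hx₁K : (x₀ + (t - t₀) • v) ∈ g '' K := by
      apply hball
      rw [Metric.mem_ball, dist_eq_norm]
      have h7 : x₀ + (t - t₀) • v - x₀ = (t - t₀) • v := by abel
      rw [h7, norm_smul, Real.norm_eq_abs, hvnorm, mul_one]
      linarith
    have hx₁t : ⟪x₀ + (t - t₀) • v, v⟫ = t := by
      rw [inner_add_left, real_inner_smul_left, hvv, ← ht₀def]
      ring
    have hx₂K : (x₀ + (t - t₀) • v + (ε / 4) • e) ∈ g '' K := by
      apply hball
      rw [Metric.mem_ball, dist_eq_norm]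
      have h5 : x₀ + (t - t₀) • v + (ε / 4) • e - x₀ = (t - t₀) • v + (ε / 4) • e := by
        abel
      rw [h5]
      have h6 : ‖(t - t₀) • v + (ε / 4) • e‖ ≤ ε / 2 + ε / 4 := by
        refine le_trans (norm_add_le _ _) ?_
        have b1 : ‖(t - t₀) • v‖ ≤ ε / 2 := by
          rw [norm_smul, hvnorm, mul_one, Real.norm_eq_abs]
          exact ht
        have b2 : ‖(ε / 4) • e‖ = ε / 4 := by
          rw [norm_smul, henorm, mul_one, Real.norm_eq_abs, abs_of_pos]
          linarith
        linarith
      linarith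
    have hx₂t : ⟪x₀ + (t - t₀) • v + (ε / 4) • e, v⟫ = t := by
      rw [inner_add_left, hx₁t, real_inner_smul_left, hev]
      ring
    rcases hslice t with hemp | ⟨r, hr, hset⟩
    · exfalso
      have hm : (x₀ + (t - t₀) • v) ∈ (g '' K) ∩ {y | ⟪y, v⟫ = t} := ⟨hx₁K, hx₁t⟩
      rw [hemp] at hm; exact hm
    · refine ⟨r, ?_, hset⟩
      have h1 : dist (x₀ + (t - t₀) • v) (t • v) ≤ r := (hball_iff hset _ hx₁t).1 hx₁K
      have h2 : dist (x₀ + (t - t₀) • v + (ε / 4) • e) (t • v) ≤ r :=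
        (hball_iff hset _ hx₂t).1 hx₂K
      have h3 : dist (x₀ + (t - t₀) • v) (x₀ + (t - t₀) • v + (ε / 4) • e) = ε / 4 := by
        rw [dist_eq_norm]
        have h8 : x₀ + (t - t₀) • v - (x₀ + (t - t₀) • v + (ε / 4) • e)
            = -((ε / 4) • e) := by abel
        rw [h8, norm_neg, norm_smul, Real.norm_eq_abs, henorm, mul_one,
          abs_of_pos (by linarith : (0:ℝ) < ε / 4)]
      have h4 := dist_triangle (x₀ + (t - t₀) • v) (t • v)
        (x₀ + (t - t₀) • v + (ε / 4) • e)
      rw [h3, dist_comm (t • v)] at h4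
      linarith
  -- nonvanishing of the linear data
  have hvb0 : vb ≠ 0 := by
    intro h
    apply hvne
    have h9 := congrArg (Subtype.val) h
    rw [hvbdef] at h9
    simpa using h9
  have heb0 : eb ≠ 0 := by
    intro h
    apply hene
    have h9 := congrArg (Subtype.val) h
    rw [hebdef] at h9
    simpa using h9
  have ha₁0 : a₁ ≠ 0 := fun h => hvb0 (F.linear.map_eq_zero_iff.1 h)
  have ha₂0 : a₂ ≠ 0 := fun h => heb0 (F.linear.map_eq_zero_iff.1 h)
  have hBpos : (0:ℝ) < ‖a₂‖ ^ 2 := pow_pos (norm_pos_iff.2 ha₂0) 2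
  have halpos : (0:ℝ) < ‖a₁‖ ^ 2 := pow_pos (norm_pos_iff.2 ha₁0) 2
  -- the cross terms vanish
  have horthL : ∀ t : ℝ, |t - t₀| ≤ ε / 2 → ⟪a₀ + t • a₁, a₂⟫ = 0 := by
    intro t ht
    obtain ⟨r, hrpos, hset⟩ := hposslice t ht
    have hiff : ∀ s : ℝ,
        ‖a₀ + t • a₁‖ ^ 2 + 2 * ⟪a₀ + t • a₁, a₂⟫ * s + ‖a₂‖ ^ 2 * s ^ 2 ≤ 1 ↔ |s| ≤ r := by
      intro s
      rw [← hPiff t s]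
      exact hLemP t r hrpos.le hset s
    have hL := symm_interval hBpos hrpos hiff
    linarith
  have hor1 : ⟪a₀ + t₀ • a₁, a₂⟫ = 0 := by
    apply horthL t₀
    rw [sub_self, abs_zero]
    linarith
  have hor2 : ⟪a₀ + (t₀ + ε / 2) • a₁, a₂⟫ = 0 := by
    apply horthL (t₀ + ε / 2)
    rw [add_sub_cancel_left, abs_of_pos (by linarith : (0:ℝ) < ε / 2)]
  have hA12 : ⟪a₁, a₂⟫ = 0 := by
    rw [inner_add_left, real_inner_smul_left] at hor1 hor2
    have h5 : (ε / 2) * ⟪a₁, a₂⟫ = 0 := by linarith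
    rcases mul_eq_zero.1 h5 with h | h
    · exfalso; linarith
    · exact h
  have hA02 : ⟪a₀, a₂⟫ = 0 := by
    rw [inner_add_left, real_inner_smul_left, hA12, mul_zero, add_zero] at hor1
    exact hor1
  have horth : ∀ t : ℝ, ⟪a₀ + t • a₁, a₂⟫ = 0 := by
    intro t
    rw [inner_add_left, real_inner_smul_left, hA02, hA12, mul_zero, add_zero]
  -- the body is a quadratic sublevel set
  have hQ : ∀ x : EuclideanSpace ℝ (Fin n), x ∈ g '' K ↔
      ‖a₁‖ ^ 2 * ⟪x, v⟫ ^ 2 + 2 * ⟪a₀, a₁⟫ * ⟪x, v⟫ + ‖a₀‖ ^ 2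
        + ‖a₂‖ ^ 2 * ‖x - ⟪x, v⟫ • v‖ ^ 2 ≤ 1 := by
    intro x
    rw [hmaster x, hPiff, horth, norm_add_smul_sq]
    constructor <;> intro h <;> linarith
  -- strict positivity of the constant term
  have hKmem : ∀ x ∈ g '' K, (‖a₁‖ ^ 2 * ⟪x, v⟫ + ⟪a₀, a₁⟫) ^ 2
      ≤ ‖a₁‖ ^ 2 - ‖a₁‖ ^ 2 * ‖a₀‖ ^ 2 + ⟪a₀, a₁⟫ ^ 2 := by
    intro x hx
    have h1 := (hQ x).1 hx
    nlinarith [mul_le_mul_of_nonneg_left h1 halpos.le,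
      mul_nonneg (mul_nonneg halpos.le hBpos.le) (sq_nonneg ‖x - ⟪x, v⟫ • v‖)]
  have hx₀K : x₀ ∈ g '' K := hball (Metric.mem_ball_self hε)
  have hx₀'K : x₀ + (ε / 2) • v ∈ g '' K := by
    apply hball
    rw [Metric.mem_ball, dist_eq_norm]
    have h7 : x₀ + (ε / 2) • v - x₀ = (ε / 2) • v := by abel
    rw [h7, norm_smul, hvnorm, mul_one, Real.norm_eq_abs,
      abs_of_pos (by linarith : (0:ℝ) < ε / 2)]
    linarith
  have hx₀'t : ⟪x₀ + (ε / 2) • v, v⟫ = t₀ + ε / 2 := by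
    rw [inner_add_left, real_inner_smul_left, hvv, ← ht₀def]
    ring
  have hDpos : 0 < ‖a₁‖ ^ 2 - ‖a₁‖ ^ 2 * ‖a₀‖ ^ 2 + ⟪a₀, a₁⟫ ^ 2 := by
    by_contra hD
    push_neg at hD
    have h1 := hKmem x₀ hx₀K
    have h2 := hKmem _ hx₀'K
    rw [hx₀'t] at h2
    rw [← ht₀def] at h1
    have e1 : ‖a₁‖ ^ 2 * t₀ + ⟪a₀, a₁⟫ = 0 := by
      have q1 : (‖a₁‖ ^ 2 * t₀ + ⟪a₀, a₁⟫) ^ 2 = 0 :=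
        le_antisymm (le_trans h1 hD) (sq_nonneg _)
      exact (pow_eq_zero_iff (by norm_num : (2:ℕ) ≠ 0)).1 q1
    have e2 : ‖a₁‖ ^ 2 * (t₀ + ε / 2) + ⟪a₀, a₁⟫ = 0 := by
      have q2 : (‖a₁‖ ^ 2 * (t₀ + ε / 2) + ⟪a₀, a₁⟫) ^ 2 = 0 :=
        le_antisymm (le_trans h2 hD) (sq_nonneg _)
      exact (pow_eq_zero_iff (by norm_num : (2:ℕ) ≠ 0)).1 q2
    nlinarith [mul_pos halpos hε]
  set R2 := (‖a₁‖ ^ 2 - ‖a₁‖ ^ 2 * ‖a₀‖ ^ 2 + ⟪a₀, a₁⟫ ^ 2) / ‖a₁‖ ^ 2 with hR2def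
  have hR2pos : 0 < R2 := div_pos hDpos halpos
  have hval : R2 = 1 - ‖a₀‖ ^ 2 + ⟪a₀, a₁⟫ ^ 2 / ‖a₁‖ ^ 2 := by
    rw [hR2def]
    exact aux_div _ _ _ halpos.ne'
  have hQ' : ∀ x : EuclideanSpace ℝ (Fin n), x ∈ g '' K ↔
      ‖a₁‖ ^ 2 * (⟪x, v⟫ + ⟪a₀, a₁⟫ / ‖a₁‖ ^ 2) ^ 2
        + ‖a₂‖ ^ 2 * ‖x - ⟪x, v⟫ • v‖ ^ 2 ≤ R2 := by
    intro x
    rw [hQ x]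
    have hexp : ‖a₁‖ ^ 2 * (⟪x, v⟫ + ⟪a₀, a₁⟫ / ‖a₁‖ ^ 2) ^ 2
        = ‖a₁‖ ^ 2 * ⟪x, v⟫ ^ 2 + 2 * ⟪a₀, a₁⟫ * ⟪x, v⟫ + ⟪a₀, a₁⟫ ^ 2 / ‖a₁‖ ^ 2 :=
      aux_sq _ _ _ halpos.ne'
    constructor <;> intro h <;> linarith [hexp, hval, h]
  -- construction of the final affine equivalence
  have hsa : (0:ℝ) < Real.sqrt (‖a₁‖ ^ 2) := Real.sqrt_pos.2 halpos
  have hsb : (0:ℝ) < Real.sqrt (‖a₂‖ ^ 2) := Real.sqrt_pos.2 hBpos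
  have hsR : (0:ℝ) < Real.sqrt R2 := Real.sqrt_pos.2 hR2pos
  set p₁ := Real.sqrt R2 / Real.sqrt (‖a₁‖ ^ 2) with hp₁def
  set p₂ := Real.sqrt R2 / Real.sqrt (‖a₂‖ ^ 2) with hp₂def
  have hp₁ : p₁ ≠ 0 := ne_of_gt (div_pos hsR hsa)
  have hp₂ : p₂ ≠ 0 := ne_of_gt (div_pos hsR hsb)
  have hp₁sq : ‖a₁‖ ^ 2 * p₁ ^ 2 = R2 := by
    rw [hp₁def, div_pow, Real.sq_sqrt halpos.le, Real.sq_sqrt hR2pos.le, mul_comm,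
      div_mul_cancel₀ _ halpos.ne']
  have hp₂sq : ‖a₂‖ ^ 2 * p₂ ^ 2 = R2 := by
    rw [hp₂def, div_pow, Real.sq_sqrt hBpos.le, Real.sq_sqrt hR2pos.le, mul_comm,
      div_mul_cancel₀ _ hBpos.ne']
  obtain ⟨φ, hφ⟩ : ∃ φ : EuclideanSpace ℝ (Fin n) ≃ᵃ[ℝ] EuclideanSpace ℝ (Fin n),
      ∀ y : EuclideanSpace ℝ (Fin n),
        φ y = (-(⟪a₀, a₁⟫ / ‖a₁‖ ^ 2)) • v + (p₂ • y + (p₁ - p₂) • ⟪y, v⟫ • v) := by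
    refine ⟨(scaleEquiv v hvv p₁ p₂ hp₁ hp₂).toAffineEquiv.trans
      (AffineEquiv.constVAdd ℝ (EuclideanSpace ℝ (Fin n))
        ((-(⟪a₀, a₁⟫ / ‖a₁‖ ^ 2)) • v)), fun y => ?_⟩
    show (-(⟪a₀, a₁⟫ / ‖a₁‖ ^ 2)) • v +ᵥ (scaleEquiv v hvv p₁ p₂ hp₁ hp₂ y) = _
    rw [vadd_eq_add, scaleEquiv_apply]
  have hclaim : ∀ y : EuclideanSpace ℝ (Fin n), φ y ∈ g '' K ↔ ‖y‖ ≤ 1 := by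
    intro y
    have h1 : ⟪φ y, v⟫ = -(⟪a₀, a₁⟫ / ‖a₁‖ ^ 2) + p₁ * ⟪y, v⟫ := by
      rw [hφ]
      simp only [inner_add_left, real_inner_smul_left, hvv]
      ring
    have h2 : φ y - ⟪φ y, v⟫ • v = p₂ • (y - ⟪y, v⟫ • v) := by
      rw [h1, hφ]
      match_scalars <;> ring
    rw [hQ' (φ y), h2, h1]
    have h3 : ‖p₂ • (y - ⟪y, v⟫ • v)‖ ^ 2 = p₂ ^ 2 * ‖y - ⟪y, v⟫ • v‖ ^ 2 := by
      rw [norm_smul, Real.norm_eq_abs, mul_pow, sq_abs]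
    rw [h3]
    have h4 : -(⟪a₀, a₁⟫ / ‖a₁‖ ^ 2) + p₁ * ⟪y, v⟫ + ⟪a₀, a₁⟫ / ‖a₁‖ ^ 2
        = p₁ * ⟪y, v⟫ := by ring
    rw [h4]
    have h5a : ‖a₁‖ ^ 2 * (p₁ * ⟪y, v⟫) ^ 2 = R2 * ⟪y, v⟫ ^ 2 := by
      rw [← hp₁sq]; ring
    have h5b : ‖a₂‖ ^ 2 * (p₂ ^ 2 * ‖y - ⟪y, v⟫ • v‖ ^ 2)
        = R2 * ‖y - ⟪y, v⟫ • v‖ ^ 2 := by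
      rw [← hp₂sq]; ring
    rw [h5a, h5b, ← mul_add, ← pyth v y hvv,
      mul_le_iff_le_one_right hR2pos,
      ← pow_le_one_iff_of_nonneg (norm_nonneg y) (two_ne_zero)]
  have himg : φ '' Metric.closedBall 0 1 = g '' K := by
    ext x
    constructor
    · rintro ⟨y, hy, rfl⟩
      exact (hclaim y).2 (mem_closedBall_zero_iff.1 hy)
    · intro hx
      refine ⟨φ.symm x, ?_, φ.apply_symm_apply x⟩
      rw [mem_closedBall_zero_iff]
      refine (hclaim _).1 ?_
      rw [φ.apply_symm_apply]
      exact hx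
  refine ⟨φ.trans g.symm, ?_⟩
  rw [AffineEquiv.coe_trans, Set.image_comp, himg]
  ext x
  constructor
  · intro hx
    exact ⟨g x, Set.mem_image_of_mem _ hx, g.symm_apply_apply x⟩
  · rintro ⟨y, ⟨z, hz, rfl⟩, rfl⟩
    simpa using hz
end

section
/- Let K ⊂ ℝ^n be a symmetric convex body and suppose that the closed unit Euclidean ball is the unique ellipsoid of minimal volume containing K (that is, the closed unit ball contains K, and every ellipsoid containing K has volume at least that of the unit ball, with equality only for the unit ball itself). Then every linear isomorphism g : ℝ^n → ℝ^n with g(K) = K maps the closed unit ball onto itself; in particular, g is an orthogonal transformation. -/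
open scoped RealInnerProductSpace

private lemma norm_le_of_image_ball_subset {E : Type*} [NormedAddCommGroup E]
    [NormedSpace ℝ E] (g : E ≃ₗ[ℝ] E)
    (h : g '' Metric.closedBall 0 1 ⊆ Metric.closedBall 0 1) (x : E) : ‖g x‖ ≤ ‖x‖ := by
  rcases eq_or_ne x 0 with rfl | hx
  · simp
  · have hxn : (0:ℝ) < ‖x‖ := norm_pos_iff.mpr hx
    have hy : (‖x‖⁻¹ • x) ∈ Metric.closedBall (0:E) 1 := by
      rw [mem_closedBall_zero_iff, norm_smul, norm_inv, norm_norm]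
      rw [inv_mul_cancel₀ hxn.ne']
    have := h ⟨_, hy, rfl⟩
    rw [mem_closedBall_zero_iff, map_smul, norm_smul, norm_inv, norm_norm] at this
    calc ‖g x‖ = ‖x‖ * (‖x‖⁻¹ * ‖g x‖) := by field_simp
    _ ≤ ‖x‖ * 1 := by exact mul_le_mul_of_nonneg_left this hxn.le
    _ = ‖x‖ := mul_one _

/-- If the closed unit ball is the unique minimal-volume ellipsoid
containing a symmetric convex body K ⊂ ℝ^n, then every linear isomorphism fixing K
maps the closed unit ball onto itself; in particular it is an orthogonal
transformation. -/
theorem stmt_14 (n : ℕ)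
    (K : Set (EuclideanSpace ℝ (Fin n))) (hK : IsConvexBody K)
    (hKsymm : ∀ x ∈ K, -x ∈ K)
    (hsub : K ⊆ Metric.closedBall 0 1)
    (hmin : ∀ D : Set (EuclideanSpace ℝ (Fin n)), IsEllipsoid D → K ⊆ D →
      MeasureTheory.volume (Metric.closedBall (0 : EuclideanSpace ℝ (Fin n)) 1) ≤
        MeasureTheory.volume D)
    (huniq : ∀ D : Set (EuclideanSpace ℝ (Fin n)), IsEllipsoid D → K ⊆ D →
      MeasureTheory.volume D =
        MeasureTheory.volume (Metric.closedBall (0 : EuclideanSpace ℝ (Fin n)) 1) →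
      D = Metric.closedBall 0 1)
    (g : EuclideanSpace ℝ (Fin n) ≃ₗ[ℝ] EuclideanSpace ℝ (Fin n)) (hg : g '' K = K) :
    g '' Metric.closedBall 0 1 = Metric.closedBall 0 1 ∧ ∀ x, ‖g x‖ = ‖x‖ := by
  set cb := Metric.closedBall (0 : EuclideanSpace ℝ (Fin n)) 1 with hcb
  have hvolpos : 0 < MeasureTheory.volume cb :=
    Metric.measure_closedBall_pos _ _ one_pos
  have hvolfin : MeasureTheory.volume cb < ⊤ := MeasureTheory.measure_closedBall_lt_top
  have himg : ∀ f : EuclideanSpace ℝ (Fin n) ≃ₗ[ℝ] EuclideanSpace ℝ (Fin n),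
      MeasureTheory.volume (f '' cb) =
        ENNReal.ofReal |LinearMap.det (f : EuclideanSpace ℝ (Fin n) →ₗ[ℝ] _)| *
          MeasureTheory.volume cb := fun f =>
    MeasureTheory.Measure.addHaar_image_linearMap _ _ _
  have hone : ∀ f : EuclideanSpace ℝ (Fin n) ≃ₗ[ℝ] EuclideanSpace ℝ (Fin n),
      f '' K = K → 1 ≤ |LinearMap.det (f : EuclideanSpace ℝ (Fin n) →ₗ[ℝ] _)| := by
    intro f hf
    have hell : IsEllipsoid (f '' cb) := ⟨f.toAffineEquiv, by
      simp [LinearEquiv.coe_toAffineEquiv, hcb]⟩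
    have hKsub : K ⊆ f '' cb := by
      conv_lhs => rw [← hf]
      exact Set.image_mono hsub
    have := hmin _ hell hKsub
    rw [himg f] at this
    by_contra hlt
    push_neg at hlt
    have h1 : ENNReal.ofReal |LinearMap.det (f : EuclideanSpace ℝ (Fin n) →ₗ[ℝ] _)| < 1 := by
      exact lt_of_lt_of_le (ENNReal.ofReal_lt_ofReal_iff one_pos |>.mpr hlt)
        (by simp)
    have : ENNReal.ofReal |LinearMap.det (f : EuclideanSpace ℝ (Fin n) →ₗ[ℝ] _)| *
        MeasureTheory.volume cb < 1 * MeasureTheory.volume cb :=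
      by rw [mul_comm _ (MeasureTheory.volume cb), mul_comm 1]; exact ENNReal.mul_lt_mul_right hvolpos.ne' hvolfin.ne h1
    rw [one_mul] at this
    exact absurd ‹MeasureTheory.volume cb ≤ _› this.not_ge
  have hgsK : g.symm '' K = K := by
    conv_lhs => rw [← hg, ← Set.image_comp]
    simp
  have hd1 := hone g hg
  have hd2 := hone g.symm hgsK
  rw [LinearEquiv.det_coe_symm, abs_inv] at hd2
  have hdet : |LinearMap.det (g : EuclideanSpace ℝ (Fin n) →ₗ[ℝ] _)| = 1 := by
    have hpos : 0 < |LinearMap.det (g : EuclideanSpace ℝ (Fin n) →ₗ[ℝ] _)| :=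
      lt_of_lt_of_le one_pos hd1
    have := (one_le_inv₀ hpos).mp hd2
    linarith
  have hgb : g '' cb = cb := by
    refine huniq _ ⟨g.toAffineEquiv, by simp [LinearEquiv.coe_toAffineEquiv, hcb]⟩
      ?_ ?_
    · conv_lhs => rw [← hg]
      exact Set.image_mono hsub
    · rw [himg g, hdet]; simp
  refine ⟨hgb, fun x => ?_⟩
  have h1 := norm_le_of_image_ball_subset g hgb.le x
  have hgsb : g.symm '' cb = cb := by
    conv_lhs => rw [← hgb, ← Set.image_comp]
    simp
  have h2 := norm_le_of_image_ball_subset g.symm hgsb.le (g x)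
  rw [LinearEquiv.symm_apply_apply] at h2
  exact le_antisymm h1 h2
end

section
/- Let n ≥ 3 and let K ⊂ ℝ^n be an affine body of revolution with axis of revolution L and associated hyperplane of revolution H. Let ℓ be a 1-dimensional linear subspace parallel to H, and let π : ℝ^n → ℓ⊥ be the orthogonal projection along ℓ. Then there exists a hyperplane Γ of ℝ^n containing L such that π(Γ ∩ K) = π(K); that is, the shadow boundary of K in the direction ℓ lies in a hyperplane through the axis L. -/
open scoped RealInnerProductSpace

/-- If K ⊂ ℝ^n is an affine body of revolution with axis of
revolution L and hyperplane of revolution H, and ℓ = ℝ∙u is parallel to H, then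
there is a hyperplane Γ = {y | ⟪y,w⟫ = c} containing L such that the orthogonal
projection along ℓ of Γ ∩ K equals the projection of K (the shadow boundary of K in
the direction ℓ lies in a hyperplane through the axis L). -/
theorem stmt_15 (n : ℕ) (hn : 3 ≤ n)
    (K : Set (EuclideanSpace ℝ (Fin n))) (hK : IsConvexBody K)
    (L H : Set (EuclideanSpace ℝ (Fin n))) (hrev : IsAffineBORAxisHyp K L H)
    (u : EuclideanSpace ℝ (Fin n)) (hu : u ≠ 0)
    (hpar : ∀ y ∈ H, y + u ∈ H) :
    ∃ (w : EuclideanSpace ℝ (Fin n)) (c : ℝ), w ≠ 0 ∧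
      L ⊆ {y | ⟪y, w⟫ = c} ∧
      (Submodule.orthogonalProjectionOnto ((ℝ ∙ u)ᗮ)) '' ({y | ⟪y, w⟫ = c} ∩ K) =
        (Submodule.orthogonalProjectionOnto ((ℝ ∙ u)ᗮ)) '' K := by
  classical
  obtain ⟨g, v, ⟨hv, hball⟩, hL, hH⟩ := hrev
  have hg : ∀ y : EuclideanSpace ℝ (Fin n), g y = g.linear y + g 0 := by
    intro y
    have := g.toAffineMap.map_vadd 0 y
    simpa [vadd_eq_add] using this
  set u' : EuclideanSpace ℝ (Fin n) := g.linear u with hu'def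
  have hu'0 : u' ≠ 0 := by
    intro h
    exact hu (by simpa using g.linear.map_eq_zero_iff.mp h)
  -- u' is orthogonal to v
  have hHne : H.Nonempty := by
    have h0 : (0 : EuclideanSpace ℝ (Fin n)) ∈ g '' H := by rw [hH]; simp
    obtain ⟨y, hy, -⟩ := h0
    exact ⟨y, hy⟩
  obtain ⟨y₀, hy₀⟩ := hHne
  have horth : ⟪u', v⟫ = 0 := by
    have h1 : ⟪g y₀, v⟫ = 0 := by
      have : g y₀ ∈ g '' H := Set.mem_image_of_mem g hy₀
      rw [hH] at this; exact this
    have h2 : ⟪g (y₀ + u), v⟫ = 0 := by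
      have : g (y₀ + u) ∈ g '' H := Set.mem_image_of_mem g (hpar y₀ hy₀)
      rw [hH] at this; exact this
    have h3 : g (y₀ + u) = g y₀ + u' := by
      rw [hg (y₀ + u), hg y₀, map_add]
      abel
    rw [h3, inner_add_left, h1] at h2
    simpa using h2
  have hvorth : ⟪v, u'⟫ = 0 := by rw [real_inner_comm]; exact horth
  set A : EuclideanSpace ℝ (Fin n) →ₗ[ℝ] EuclideanSpace ℝ (Fin n) := (g.linear : EuclideanSpace ℝ (Fin n) →ₗ[ℝ] EuclideanSpace ℝ (Fin n)) with hA
  have hAapp : ∀ y : EuclideanSpace ℝ (Fin n), A y = g.linear y := fun _ => rfl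
  refine ⟨LinearMap.adjoint A u', -⟪g 0, u'⟫, ?_, ?_, ?_⟩
  · -- w ≠ 0
    intro h
    have h1 : ⟪g.linear.symm u', LinearMap.adjoint A u'⟫ = ⟪A (g.linear.symm u'), u'⟫ :=
      LinearMap.adjoint_inner_right A _ _
    rw [h, inner_zero_right] at h1
    have h2 : A (g.linear.symm u') = u' := by
      rw [hAapp]; exact g.linear.apply_symm_apply u'
    rw [h2] at h1
    exact hu'0 (inner_self_eq_zero.mp h1.symm)
  · -- L ⊆ Γ
    intro y hy
    have : g y ∈ g '' L := Set.mem_image_of_mem g hy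
    rw [hL] at this
    obtain ⟨t, ht⟩ := this
    have hgy : ⟪g y, u'⟫ = 0 := by
      rw [ht]; simp [inner_smul_left, hvorth]
    have : ⟪A y, u'⟫ = ⟪g y - g 0, u'⟫ := by
      rw [hAapp, hg y]; congr 1; abel
    show ⟪y, LinearMap.adjoint A u'⟫ = -⟪g 0, u'⟫
    rw [LinearMap.adjoint_inner_right, this, inner_sub_left, hgy]
    ring
  · -- projection equality
    apply Set.Subset.antisymm
    · exact Set.image_mono (Set.inter_subset_right)
    · rintro - ⟨x, hx, rfl⟩
      have hu'u' : ⟪u', u'⟫ ≠ 0 := fun h => hu'0 (inner_self_eq_zero.mp h)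
      set t : ℝ := ⟪g x, u'⟫ / ⟪u', u'⟫ with htdef
      set z : EuclideanSpace ℝ (Fin n) := x - t • u with hzdef
      have hgz : g z = g x - t • u' := by
        rw [hg z, hg x, hzdef, map_sub, map_smul]
        abel
      have hgzu' : ⟪g z, u'⟫ = 0 := by
        rw [hgz, inner_sub_left, real_inner_smul_left, htdef,
          div_mul_cancel₀ _ hu'u']
        ring
      -- z ∈ K via the ball section
      set c' : ℝ := ⟪g x, v⟫ with hc'def
      have hmem : g x ∈ g '' K ∩ {y : EuclideanSpace ℝ (Fin n) | ⟪y, v⟫ = c'} :=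
        ⟨Set.mem_image_of_mem g hx, rfl⟩
      rcases hball c' with hemp | ⟨r, hr, heq⟩
      · rw [hemp] at hmem; exact absurd hmem (Set.notMem_empty _)
      · set q : EuclideanSpace ℝ (Fin n) := 0 + ((c' - ⟪(0 : EuclideanSpace ℝ (Fin n)), v⟫) / ⟪v, v⟫) • v with hq
        have hqu' : ⟪q, u'⟫ = 0 := by
          rw [hq]; simp [inner_smul_left, hvorth]
        rw [heq] at hmem
        obtain ⟨hmem1, hmem2⟩ := hmem
        have hgzv : ⟪g z, v⟫ = c' := by
          rw [hgz, inner_sub_left, inner_smul_left, horth]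
          simp [hc'def]
        -- Pythagoras: dist (g z) q ≤ dist (g x) q
        have hpyth : ⟪g z - q, t • u'⟫ = 0 := by
          rw [inner_sub_left, inner_smul_right, inner_smul_right, hgzu', hqu']
          ring
        have hsum : g x - q = (g z - q) + t • u' := by rw [hgz]; abel
        have hnorm : ‖g z - q‖ ≤ ‖g x - q‖ := by
          have h1 : ‖(g z - q) + t • u'‖ ^ 2 =
              ‖g z - q‖ ^ 2 + 2 * ⟪g z - q, t • u'⟫ + ‖t • u'‖ ^ 2 :=
            norm_add_sq_real _ _
          rw [hpyth] at h1
          rw [hsum]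
          nlinarith [norm_nonneg (g z - q), norm_nonneg ((g z - q) + t • u'),
            sq_nonneg ‖t • u'‖]
        have hdist : dist (g z) q ≤ r := by
          rw [dist_eq_norm]
          calc ‖g z - q‖ ≤ ‖g x - q‖ := hnorm
            _ = dist (g x) q := (dist_eq_norm _ _).symm
            _ ≤ r := hmem2
        have hgzK : g z ∈ g '' K := by
          have : g z ∈ g '' K ∩ {y : EuclideanSpace ℝ (Fin n) | ⟪y, v⟫ = c'} := by
            rw [heq]; exact ⟨hgzv, hdist⟩
          exact this.1
        have hzK : z ∈ K := by
          obtain ⟨z', hz', hz'eq⟩ := hgzK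
          have : z' = z := g.injective hz'eq
          rwa [this] at hz'
        -- z ∈ Γ
        have hzΓ : ⟪z, LinearMap.adjoint A u'⟫ = -⟪g 0, u'⟫ := by
          rw [LinearMap.adjoint_inner_right]
          have h1 : A z = g z - g 0 := by
            rw [hAapp, hg z]; abel
          rw [h1, inner_sub_left, hgzu']
          ring
        refine ⟨z, ⟨hzΓ, hzK⟩, ?_⟩
        -- projections agree
        have hproju : Submodule.orthogonalProjectionOnto ((ℝ ∙ u)ᗮ) u = 0 := by
          apply Submodule.orthogonalProjectionOnto_apply_of_mem_orthogonal
          rw [Submodule.mem_orthogonal]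
          intro y hy
          have : (u : EuclideanSpace ℝ (Fin n)) ∈ (ℝ ∙ u) := Submodule.mem_span_singleton_self u
          exact real_inner_comm u y ▸ hy u this
        rw [hzdef, map_sub, map_smul, hproju]
        simp
end
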